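/- arXiv:2005.03829 — 5 statements merged into one kernel-verified Lean document; each statement's English description precedes it below -/
import Mathlib

section
/- Let G be a finite group whose order is divisible by at least two distinct primes, and let x and y be two distinct elements of G. Then N[x] = N[y] in the order supergraph 𝒮(G) if and only if one of the following occurs: (i) o(x) = o(y); (ii) {o(x), o(y)} = {1, exp(G)}, where exp(G) is the exponent of G; (iii) {o(x), o(y)} = {p^m, p^n} for some prime p and positive integers m > n, and p^n·q ∉ π_e(G) for every prime q ≠ p. -/
/-- The closed neighborhood of a vertex `x` in a simple graph. -/
def closedNbhd {V : Type*} (Γ : SimpleGraph V) (x : V) : Set V :=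
  insert x (Γ.neighborSet x)

/-- `z` strongly resolves `x` and `y` if some shortest path from `z` to `x`
contains `y`, or some shortest path from `z` to `y` contains `x`. -/
def StronglyResolves {V : Type*} (Γ : SimpleGraph V) (z x y : V) : Prop :=
  (∃ w : Γ.Walk z x, w.IsPath ∧ w.length = Γ.dist z x ∧ y ∈ w.support) ∨
  (∃ w : Γ.Walk z y, w.IsPath ∧ w.length = Γ.dist z y ∧ x ∈ w.support)

/-- `S` is a strong resolving set if every pair of distinct vertices is
strongly resolved by some vertex of `S`. -/
def IsStrongResolvingSet {V : Type*} (Γ : SimpleGraph V) (S : Set V) : Prop :=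
  ∀ x y : V, x ≠ y → ∃ z ∈ S, StronglyResolves Γ z x y

/-- The strong metric dimension: the minimum size of a strong resolving set. -/
noncomputable def sdim {V : Type*} [Fintype V] (Γ : SimpleGraph V) : ℕ :=
  sInf {k | ∃ S : Finset V, S.card = k ∧ IsStrongResolvingSet Γ ↑S}

/-- The equivalence relation `x ≈ y` iff `N[x] = N[y]`. -/
def nbhdSetoid {V : Type*} (Γ : SimpleGraph V) : Setoid V :=
  ⟨fun x y => closedNbhd Γ x = closedNbhd Γ y,
   ⟨fun _ => rfl, Eq.symm, Eq.trans⟩⟩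

/-- The reduced graph `ℛ_Γ`: vertices are the `≈`-classes, two distinct classes
being adjacent iff some (equivalently, any) pair of their members is adjacent in `Γ`. -/
def reducedGraph {V : Type*} (Γ : SimpleGraph V) :
    SimpleGraph (Quotient (nbhdSetoid Γ)) where
  Adj a b := a ≠ b ∧ ∃ x y : V,
    Quotient.mk (nbhdSetoid Γ) x = a ∧ Quotient.mk (nbhdSetoid Γ) y = b ∧ Γ.Adj x y
  symm := ⟨by rintro a b ⟨h, x, y, hx, hy, hadj⟩; exact ⟨h.symm, y, x, hy, hx, hadj.symm⟩⟩
  loopless := ⟨by rintro a ⟨h, -⟩; exact h rfl⟩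

/-- The order supergraph `𝒮(G)`: distinct `x, y` are adjacent iff
`o(x) ∣ o(y)` or `o(y) ∣ o(x)`. -/
def orderSupergraph (G : Type*) [Group G] : SimpleGraph G where
  Adj x y := x ≠ y ∧ (orderOf x ∣ orderOf y ∨ orderOf y ∣ orderOf x)
  symm := ⟨by rintro x y ⟨h, h2⟩; exact ⟨h.symm, h2.symm⟩⟩
  loopless := ⟨by rintro x ⟨h, -⟩; exact h rfl⟩

/-- The enhanced power graph `𝒫_E(G)`: distinct `x, y` are adjacent iff
`⟨x, y⟩` is cyclic. -/
def enhancedPowerGraph (G : Type*) [Group G] : SimpleGraph G where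
  Adj x y := x ≠ y ∧ IsCyclic (Subgroup.closure ({x, y} : Set G))
  symm := ⟨by rintro x y ⟨h, h2⟩; rw [Set.pair_comm] at h2; exact ⟨h.symm, h2⟩⟩
  loopless := ⟨by rintro x ⟨h, -⟩; exact h rfl⟩

/-- The reduced power graph `𝒫_R(G)`: distinct `x, y` are adjacent iff
`⟨x⟩ ⊂ ⟨y⟩` or `⟨y⟩ ⊂ ⟨x⟩`. -/
def reducedPowerGraph (G : Type*) [Group G] : SimpleGraph G where
  Adj x y := Subgroup.zpowers x < Subgroup.zpowers y ∨ Subgroup.zpowers y < Subgroup.zpowers x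
  symm := ⟨by rintro x y h; exact h.symm⟩
  loopless := ⟨by rintro x h; rcases h with h | h <;> exact lt_irrefl _ h⟩

/-- `Ω n`: the number of prime factors of `n` counted with multiplicity. -/
def bigOmega (n : ℕ) : ℕ := n.primeFactorsList.length

/-- A maximal cyclic subgroup: a cyclic subgroup not properly contained in any
cyclic subgroup. -/
def IsMaxCyclic {G : Type*} [Group G] (M : Subgroup G) : Prop :=
  IsCyclic M ∧ ∀ N : Subgroup G, IsCyclic N → M ≤ N → M = N

/-- `ℳ_g`: the set of maximal cyclic subgroups containing `g`. -/
def maxCyclicOn {G : Type*} [Group G] (g : G) : Set (Subgroup G) :=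
  {M | IsMaxCyclic M ∧ g ∈ M}


lemma exists_orderOf_dvd {G : Type*} [Group G] [Fintype G] (y : G) {d : ℕ}
    (hd : d ∣ orderOf y) : ∃ w : G, orderOf w = d := by
  refine ⟨y ^ (orderOf y / d), ?_⟩
  have hy : 0 < orderOf y := orderOf_pos y
  rw [orderOf_pow, Nat.gcd_eq_right (Nat.div_dvd_of_dvd hd), Nat.div_div_self hd hy.ne']

lemma exists_factorization_lt {b c : ℕ} (hc : c ≠ 0) (hbc : b ∣ c) (hne : b ≠ c) :
    ∃ r : ℕ, r.Prime ∧ b.factorization r < c.factorization r := by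
  have hb : b ≠ 0 := fun h => by subst h; exact hc (Nat.eq_zero_of_zero_dvd hbc)
  have hcb : ¬ c ∣ b := fun h => hne (Nat.dvd_antisymm hbc h)
  rw [← Nat.factorization_le_iff_dvd hc hb, Finsupp.le_def] at hcb
  push_neg at hcb
  obtain ⟨r, hr⟩ := hcb
  have hr' : 0 < c.factorization r := lt_of_le_of_lt (Nat.zero_le _) hr
  have hmem : r ∈ c.primeFactors := by
    rw [← Nat.support_factorization]; exact Finsupp.mem_support_iff.mpr hr'.ne'
  exact ⟨r, Nat.prime_of_mem_primeFactors hmem, hr⟩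

lemma eq_pow_of_unique_prime {c p : ℕ} (hp : p.Prime) (hc : c ≠ 0)
    (h : ∀ q : ℕ, q.Prime → q ∣ c → q = p) : c = p ^ (c.factorization p) := by
  refine Nat.dvd_antisymm ?_ (Nat.ordProj_dvd c p)
  rw [← Nat.factorization_le_iff_dvd hc (pow_ne_zero _ hp.pos.ne'), Finsupp.le_def]
  intro r
  rcases eq_or_ne r p with rfl | hrp
  · rw [hp.factorization_pow]; simp
  · have h0 : c.factorization r = 0 := by
      by_contra h0
      have hrmem : r ∈ c.primeFactors := by
        rw [← Nat.support_factorization]; exact Finsupp.mem_support_iff.mpr h0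
      exact hrp (h r (Nat.prime_of_mem_primeFactors hrmem) (Nat.dvd_of_mem_primeFactors hrmem))
    simp [h0]

lemma aux_forward {G : Type*} [Group G] [Fintype G]
    (hG : ∃ p q : ℕ, p.Prime ∧ q.Prime ∧ p ≠ q ∧ p ∣ Fintype.card G ∧ q ∣ Fintype.card G)
    (a b : ℕ) (hbe : ∃ y : G, orderOf y = b) (hab : a ∣ b)
    (hD : ∀ z : G, (a ∣ orderOf z ∨ orderOf z ∣ a) ↔ (b ∣ orderOf z ∨ orderOf z ∣ b)) :
    a = b ∨ ({a, b} : Set ℕ) = {1, Monoid.exponent G} ∨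
      (∃ p m k : ℕ, p.Prime ∧ 0 < k ∧ k < m ∧ ({a, b} : Set ℕ) = {p ^ m, p ^ k} ∧
        ∀ q : ℕ, q.Prime → q ≠ p → ¬∃ g : G, orderOf g = p ^ k * q) := by
  obtain ⟨y, hy⟩ := hbe
  have hb0 : b ≠ 0 := hy ▸ (orderOf_pos y).ne'
  have ha0 : a ≠ 0 := fun h => hb0 (Nat.eq_zero_of_zero_dvd (h ▸ hab))
  rcases eq_or_ne a b with heq | hne
  · exact Or.inl heq
  rcases eq_or_ne a 1 with ha1 | ha1
  · -- a = 1 : show b = exponent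
    right; left
    have hall : ∀ z : G, orderOf z ∣ b := by
      intro z
      by_contra hzb
      have hz := (hD z).mp (Or.inl (by rw [ha1]; exact one_dvd _))
      rcases hz with hbz | h
      swap
      · exact hzb h
      have hne2 : b ≠ orderOf z := fun h => hzb (h ▸ dvd_rfl)
      obtain ⟨r, hr, hrlt⟩ := exists_factorization_lt (orderOf_pos z).ne' hbz hne2
      have hdvd : r ^ (b.factorization r + 1) ∣ orderOf z :=
        (hr.pow_dvd_iff_le_factorization (orderOf_pos z).ne').mpr hrlt
      obtain ⟨w, hw⟩ := exists_orderOf_dvd z hdvd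
      have hw2 := (hD w).mp (Or.inl (by rw [ha1]; exact one_dvd _))
      rw [hw] at hw2
      rcases hw2 with hb1 | hb2
      · obtain ⟨j, hj, hbj⟩ := (Nat.dvd_prime_pow hr).mp hb1
        obtain ⟨p, q, hp, hq, hpq, hpc, hqc⟩ := hG
        have hs : ∃ s : ℕ, s.Prime ∧ s ≠ r ∧ s ∣ Fintype.card G := by
          rcases eq_or_ne p r with rfl | hpr
          · exact ⟨q, hq, fun h => hpq h.symm, hqc⟩
          · exact ⟨p, hp, hpr, hpc⟩
        obtain ⟨s, hs, hsr, hsc⟩ := hs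
        haveI : Fact s.Prime := ⟨hs⟩
        obtain ⟨u, hu⟩ := exists_prime_orderOf_dvd_card s hsc
        have hu2 := (hD u).mp (Or.inl (by rw [ha1]; exact one_dvd _))
        rw [hu] at hu2
        have hsb' : s ∣ b := by
          rcases hu2 with hbs | hsb
          · rcases (Nat.dvd_prime hs).mp hbs with h1 | h2
            · exact absurd (ha1.trans h1.symm) hne
            · exact h2 ▸ dvd_rfl
          · exact hsb
        rw [hbj] at hsb'
        exact hsr ((Nat.prime_dvd_prime_iff_eq hs hr).mp (hs.dvd_of_dvd_pow hsb'))
      · have := (hr.pow_dvd_iff_le_factorization hb0).mp hb2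
        omega
    have h1 : Monoid.exponent G ∣ b := Monoid.exponent_dvd_of_forall_pow_eq_one
      (fun g => orderOf_dvd_iff_pow_eq_one.mp (hall g))
    have h2 : b ∣ Monoid.exponent G := hy ▸ Monoid.order_dvd_exponent y
    rw [ha1, Nat.dvd_antisymm h2 h1]
  · -- a ≠ 1
    have hprime : ∀ r : ℕ, r.Prime → r ∣ b → r ∣ a := by
      intro r hr hrb
      obtain ⟨w, hw⟩ := exists_orderOf_dvd (d := r) y (by rw [hy]; exact hrb)
      have hw2 := (hD w).mpr (Or.inr (by rw [hw]; exact hrb))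
      rw [hw] at hw2
      rcases hw2 with har | hra
      · rcases (Nat.dvd_prime hr).mp har with h1 | h2
        · exact absurd h1 ha1
        · exact h2 ▸ dvd_rfl
      · exact hra
    obtain ⟨p, hp, hplt⟩ := exists_factorization_lt hb0 hab hne
    have hpb : p ∣ b := Nat.dvd_of_mem_primeFactors (by
      rw [← Nat.support_factorization]
      exact Finsupp.mem_support_iff.mpr (lt_of_le_of_lt (Nat.zero_le _) hplt).ne')
    have hpa : p ∣ a := hprime p hp hpb
    have hk1 : 1 ≤ a.factorization p :=
      (hp.pow_dvd_iff_le_factorization ha0).mp (by simpa using hpa)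
    have hdvdb : p ^ (a.factorization p + 1) ∣ b :=
      (hp.pow_dvd_iff_le_factorization hb0).mpr hplt
    obtain ⟨w, hw⟩ := exists_orderOf_dvd (d := p ^ (a.factorization p + 1)) y (by rw [hy]; exact hdvdb)
    have hw2 := (hD w).mpr (Or.inr (by rw [hw]; exact hdvdb))
    rw [hw] at hw2
    have hapow : a ∣ p ^ (a.factorization p + 1) := by
      rcases hw2 with h1 | h2
      · exact h1
      · exact absurd ((hp.pow_dvd_iff_le_factorization ha0).mp h2) (by omega)
    obtain ⟨j, hj, haj⟩ := (Nat.dvd_prime_pow hp).mp hapow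
    have hak : a = p ^ a.factorization p := by
      rw [haj]
      congr 1
      rw [hp.factorization_pow]
      exact Finsupp.single_eq_same.symm
    have hbp : ∀ q : ℕ, q.Prime → q ∣ b → q = p := by
      intro q hq hqb
      have hqa := hprime q hq hqb
      rw [hak] at hqa
      exact (Nat.prime_dvd_prime_iff_eq hq hp).mp (hq.dvd_of_dvd_pow hqa)
    have hbk : b = p ^ b.factorization p := eq_pow_of_unique_prime hp hb0 hbp
    right; right
    refine ⟨p, b.factorization p, a.factorization p, hp, hk1, hplt, ?_, ?_⟩
    · rw [Set.pair_comm a b, ← hak, ← hbk]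
    · rintro q hq hqp ⟨g, hg⟩
      have hga := (hD g).mp (Or.inl (by rw [hg]; exact dvd_trans (dvd_of_eq hak) (dvd_mul_right _ _)))
      rw [hg] at hga
      rcases hga with h1 | h2
      · have h1' : p ^ b.factorization p ∣ p ^ a.factorization p * q := by
          rw [← hbk]; exact h1
        have hcop : Nat.Coprime (p ^ b.factorization p) q :=
          Nat.Coprime.pow_left _ ((Nat.coprime_primes hp hq).mpr (fun h => hqp h.symm))
        have hdv := hcop.dvd_of_dvd_mul_right h1'
        have hle := (Nat.pow_dvd_pow_iff_le_right hp.one_lt).mp hdv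
        omega
      · have hqd : q ∣ p ^ b.factorization p := dvd_trans (dvd_mul_left q _) (by rw [← hbk]; exact h2)
        exact hqp ((Nat.prime_dvd_prime_iff_eq hq hp).mp (hq.dvd_of_dvd_pow hqd))

lemma closedNbhd_orderSupergraph {G : Type*} [Group G] (x : G) :
    closedNbhd (orderSupergraph G) x = {z | orderOf x ∣ orderOf z ∨ orderOf z ∣ orderOf x} := by
  ext z
  simp only [closedNbhd, Set.mem_insert_iff, SimpleGraph.mem_neighborSet, orderSupergraph,
    Set.mem_setOf_eq]
  constructor
  · rintro (rfl | ⟨-, h⟩)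
    · exact Or.inl dvd_rfl
    · exact h
  · intro h
    by_cases hz : z = x
    · exact Or.inl hz
    · exact Or.inr ⟨fun e => hz e.symm, h⟩

/-- Lemma 3.5: characterization of equal closed neighborhoods in the order supergraph
of a group whose order has at least two distinct prime divisors. -/
theorem closedNbhd_eq_iff_orderSupergraph (G : Type*) [Group G] [Fintype G]
    (hG : ∃ p q : ℕ, p.Prime ∧ q.Prime ∧ p ≠ q ∧ p ∣ Fintype.card G ∧ q ∣ Fintype.card G)
    (x y : G) (hxy : x ≠ y) :
    closedNbhd (orderSupergraph G) x = closedNbhd (orderSupergraph G) y ↔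
      (orderOf x = orderOf y ∨
       ({orderOf x, orderOf y} : Set ℕ) = {1, Monoid.exponent G} ∨
       (∃ p m k : ℕ, p.Prime ∧ 0 < k ∧ k < m ∧
         ({orderOf x, orderOf y} : Set ℕ) = {p ^ m, p ^ k} ∧
         ∀ q : ℕ, q.Prime → q ≠ p → ¬∃ g : G, orderOf g = p ^ k * q)) := by
  rw [closedNbhd_orderSupergraph, closedNbhd_orderSupergraph, Set.ext_iff]
  simp only [Set.mem_setOf_eq]
  constructor
  · intro hD
    rcases (hD x).mp (Or.inl dvd_rfl) with h | h
    · have haux := aux_forward hG (orderOf y) (orderOf x) ⟨x, rfl⟩ h (fun z => (hD z).symm)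
      rcases haux with h1 | h1 | ⟨p, m, k, hp, hk, hkm, hset, hq⟩
      · exact Or.inl h1.symm
      · exact Or.inr (Or.inl ((Set.pair_comm (orderOf x) (orderOf y)).trans h1))
      · exact Or.inr (Or.inr ⟨p, m, k, hp, hk, hkm,
          (Set.pair_comm (orderOf x) (orderOf y)).trans hset, hq⟩)
    · exact aux_forward hG (orderOf x) (orderOf y) ⟨y, rfl⟩ h hD
  · rintro (h | h | ⟨p, m, k, hp, hk, hkm, hset, hq⟩)
    · intro z; rw [h]
    · intro z
      rw [Set.ext_iff] at h
      have hx1 : orderOf x = 1 ∨ orderOf x = Monoid.exponent G := by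
        have := (h (orderOf x)).mp (by simp)
        simpa using this
      have hy1 : orderOf y = 1 ∨ orderOf y = Monoid.exponent G := by
        have := (h (orderOf y)).mp (by simp)
        simpa using this
      have key : ∀ c : ℕ, (c = 1 ∨ c = Monoid.exponent G) →
          (c ∣ orderOf z ∨ orderOf z ∣ c) := by
        rintro c (rfl | rfl)
        · exact Or.inl (one_dvd _)
        · exact Or.inr (Monoid.order_dvd_exponent z)
      exact iff_of_true (key _ hx1) (key _ hy1)
    · intro z
      have hc0 : orderOf z ≠ 0 := (orderOf_pos z).ne'
      have main : (p ^ m ∣ orderOf z ∨ orderOf z ∣ p ^ m) ↔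
          (p ^ k ∣ orderOf z ∨ orderOf z ∣ p ^ k) := by
        constructor
        · rintro (h1 | h1)
          · exact Or.inl (dvd_trans (pow_dvd_pow p hkm.le) h1)
          · obtain ⟨j, hj, hcj⟩ := (Nat.dvd_prime_pow hp).mp h1
            rcases le_total j k with hjk | hjk
            · exact Or.inr (by rw [hcj]; exact pow_dvd_pow p hjk)
            · exact Or.inl (by rw [hcj]; exact pow_dvd_pow p hjk)
        · rintro (h1 | h1)
          · have hprimes : ∀ q : ℕ, q.Prime → q ∣ orderOf z → q = p := by
              intro q hqq hqz
              by_contra hqp'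
              have hcop : Nat.Coprime (p ^ k) q :=
                Nat.Coprime.pow_left _ ((Nat.coprime_primes hp hqq).mpr (fun e => hqp' e.symm))
              have hdv : p ^ k * q ∣ orderOf z := hcop.mul_dvd_of_dvd_of_dvd h1 hqz
              obtain ⟨g, hg⟩ := exists_orderOf_dvd (d := p ^ k * q) z hdv
              exact hq q hqq hqp' ⟨g, hg⟩
            have hcz : orderOf z = p ^ ((orderOf z).factorization p) :=
              eq_pow_of_unique_prime hp hc0 hprimes
            rcases le_total ((orderOf z).factorization p) m with hle | hle
            · exact Or.inr (by rw [hcz]; exact pow_dvd_pow p hle)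
            · exact Or.inl (by rw [hcz]; exact pow_dvd_pow p hle)
          · exact Or.inr (dvd_trans h1 (pow_dvd_pow p hkm.le))
      rw [Set.ext_iff] at hset
      have hx' : orderOf x = p ^ m ∨ orderOf x = p ^ k := by
        have := (hset (orderOf x)).mp (by simp)
        simpa using this
      have hy' : orderOf y = p ^ m ∨ orderOf y = p ^ k := by
        have := (hset (orderOf y)).mp (by simp)
        simpa using this
      rcases hx' with hx' | hx' <;> rcases hy' with hy' | hy' <;> rw [hx', hy']
      · exact main
      · exact main.symm
end

section
/- Let G be a finite group of order n. Then: (i) sdim(𝒫_E(G)) = n − 1 if and only if G is cyclic; (ii) if G is a non-cyclic 𝒫-group, then sdim(𝒫_E(G)) = n − 2. -/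
section AuxCor46

open SimpleGraph Subgroup

variable {G : Type*} [Group G] [Fintype G]

private lemma aux_isCyclic_zpowers (g : G) : IsCyclic (Subgroup.zpowers g) := by
  refine ⟨⟨g, Subgroup.mem_zpowers g⟩, ?_⟩
  rintro ⟨x, hx⟩
  obtain ⟨k, hk⟩ := Subgroup.mem_zpowers_iff.mp hx
  exact ⟨k, Subtype.ext (by simpa using hk)⟩

private lemma aux_closure_pair_eq {x y : G} (h : y ∈ Subgroup.zpowers x) :
    Subgroup.closure ({x, y} : Set G) = Subgroup.zpowers x := by
  apply le_antisymm
  · rw [Subgroup.closure_le]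
    intro z hz
    simp only [Set.mem_insert_iff, Set.mem_singleton_iff] at hz
    rcases hz with rfl | rfl
    · exact Subgroup.mem_zpowers _
    · exact h
  · rw [Subgroup.zpowers_le]
    exact Subgroup.subset_closure (Set.mem_insert x {y})

private lemma aux_adj_of_mem {x y : G} (hne : x ≠ y) (h : y ∈ Subgroup.zpowers x) :
    (enhancedPowerGraph G).Adj x y := by
  refine ⟨hne, ?_⟩
  rw [aux_closure_pair_eq h]
  exact aux_isCyclic_zpowers x

private lemma aux_adj_one {y : G} (h : y ≠ 1) : (enhancedPowerGraph G).Adj 1 y :=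
  (aux_adj_of_mem h (Subgroup.one_mem _)).symm

private lemma aux_reachable (x y : G) : (enhancedPowerGraph G).Reachable x y := by
  have h1 : ∀ z : G, (enhancedPowerGraph G).Reachable z 1 := by
    intro z
    rcases eq_or_ne z 1 with rfl | hz
    · exact SimpleGraph.Reachable.refl 1
    · exact ((aux_adj_one hz).symm).reachable
  exact (h1 x).trans (h1 y).symm

private lemma aux_resolve_left (x y : G) :
    StronglyResolves (enhancedPowerGraph G) x x y := by
  obtain ⟨p, hp, hl⟩ := (aux_reachable x y).exists_path_of_dist
  exact Or.inr ⟨p, hp, hl, p.start_mem_support⟩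

private lemma aux_resolve_right (x y : G) :
    StronglyResolves (enhancedPowerGraph G) y x y := by
  obtain ⟨p, hp, hl⟩ := (aux_reachable y x).exists_path_of_dist
  exact Or.inl ⟨p, hp, hl, p.start_mem_support⟩

private lemma aux_walk_length_one {V : Type*} {Γ : SimpleGraph V} {a b : V}
    (w : Γ.Walk a b) (h : w.length = 1) : w.support = [a, b] ∧ Γ.Adj a b := by
  cases w with
  | nil => simp at h
  | @cons _ c _ hadj p =>
    simp only [SimpleGraph.Walk.length_cons,
      Nat.add_eq_right] at h
    have hcb : c = b := SimpleGraph.Walk.eq_of_length_eq_zero h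
    subst hcb
    have : p = SimpleGraph.Walk.nil := SimpleGraph.Walk.nil_iff_eq_nil.mp (SimpleGraph.Walk.length_eq_zero_iff.mp h)
    subst this
    exact ⟨by simp, hadj⟩

private lemma aux_walk_length_two {V : Type*} {Γ : SimpleGraph V} {a b : V}
    (w : Γ.Walk a b) (h : w.length = 2) :
    ∃ m, w.support = [a, m, b] ∧ Γ.Adj a m ∧ Γ.Adj m b := by
  cases w with
  | nil => simp at h
  | @cons _ c _ hadj p =>
    simp only [SimpleGraph.Walk.length_cons] at h
    have hp1 : p.length = 1 := by omega
    obtain ⟨hs, ha⟩ := aux_walk_length_one p hp1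
    exact ⟨c, by simp [hs], hadj, ha⟩

private lemma aux_dist_le_two (x y : G) : (enhancedPowerGraph G).dist x y ≤ 2 := by
  rcases eq_or_ne x y with rfl | hxy
  · simp [SimpleGraph.dist_self]
  rcases eq_or_ne x 1 with rfl | hx
  · have := SimpleGraph.dist_eq_one_iff_adj.mpr (aux_adj_one (Ne.symm hxy))
    omega
  rcases eq_or_ne y 1 with rfl | hy
  · have := SimpleGraph.dist_eq_one_iff_adj.mpr (aux_adj_one hx).symm
    omega
  · have := SimpleGraph.dist_le (SimpleGraph.Walk.cons (aux_adj_one hx).symm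
      (SimpleGraph.Walk.cons (aux_adj_one hy) SimpleGraph.Walk.nil))
    simpa using this

private lemma aux_exists_gen {H : Subgroup G} (hH : IsCyclic H) :
    ∃ w : G, w ∈ H ∧ H ≤ Subgroup.zpowers w := by
  obtain ⟨⟨w, hw⟩, hgen⟩ := @IsCyclic.exists_generator H _ hH
  refine ⟨w, hw, fun h hh => ?_⟩
  obtain ⟨k, hk⟩ := Subgroup.mem_zpowers_iff.mp (hgen ⟨h, hh⟩)
  exact Subgroup.mem_zpowers_iff.mpr ⟨k, by simpa using congrArg Subtype.val hk⟩

private lemma aux_cyclic_of_complete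
    (h : ∀ x y : G, x ≠ y → IsCyclic (Subgroup.closure ({x, y} : Set G))) :
    IsCyclic G := by
  obtain ⟨g, -, hg⟩ := Finset.exists_max_image (Finset.univ : Finset G) orderOf
    ⟨1, Finset.mem_univ 1⟩
  have hgen : ∀ y : G, y ∈ Subgroup.zpowers g := by
    intro y
    rcases eq_or_ne g y with rfl | hne
    · exact Subgroup.mem_zpowers g
    obtain ⟨w, hwH, hHw⟩ := aux_exists_gen (h g y hne)
    have hgH : g ∈ Subgroup.closure ({g, y} : Set G) :=
      Subgroup.subset_closure (Set.mem_insert g {y})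
    have hyH : y ∈ Subgroup.closure ({g, y} : Set G) :=
      Subgroup.subset_closure (Set.mem_insert_of_mem g rfl)
    have h1 : Subgroup.zpowers g ≤ Subgroup.zpowers w :=
      Subgroup.zpowers_le.mpr (hHw hgH)
    have h2 : Subgroup.zpowers g = Subgroup.zpowers w := by
      apply Subgroup.eq_of_le_of_card_ge h1
      rw [Nat.card_zpowers, Nat.card_zpowers]
      exact hg w (Finset.mem_univ w)
    rw [h2]
    exact hHw hyH
  refine ⟨g, fun x => ?_⟩
  obtain ⟨k, hk⟩ := Subgroup.mem_zpowers_iff.mp (hgen x)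
  exact ⟨k, hk⟩

private lemma aux_not_resolves_complete (hc : IsCyclic G) {x y z : G}
    (hxy : x ≠ y) (hzx : z ≠ x) (hzy : z ≠ y) :
    ¬ StronglyResolves (enhancedPowerGraph G) z x y := by
  haveI := hc
  have hadj : ∀ a b : G, a ≠ b → (enhancedPowerGraph G).Adj a b :=
    fun a b h => ⟨h, Subgroup.isCyclic _⟩
  have key : ∀ a b c : G, a ≠ b → c ≠ a → c ≠ b →
      ¬ ∃ w : (enhancedPowerGraph G).Walk a b, w.IsPath ∧
        w.length = (enhancedPowerGraph G).dist a b ∧ c ∈ w.support := by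
    intro a b c hab hca hcb
    rintro ⟨w, hp, hl, hcs⟩
    have hd : (enhancedPowerGraph G).dist a b = 1 :=
      SimpleGraph.dist_eq_one_iff_adj.mpr (hadj a b hab)
    rw [hd] at hl
    obtain ⟨hs, -⟩ := aux_walk_length_one w hl
    rw [hs] at hcs
    simp only [List.mem_cons, List.mem_singleton, List.not_mem_nil, or_false] at hcs
    rcases hcs with rfl | rfl
    · exact hca rfl
    · exact hcb rfl
  rintro (h | h)
  · exact key z x y hzx hzy.symm hxy.symm h
  · exact key z y x hzy hzx.symm hxy h

private lemma aux_zpowers_eq_of_adj (hP : ∀ g : G, g ≠ 1 → (orderOf g).Prime)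
    {x y : G} (hx : x ≠ 1) (hy : y ≠ 1)
    (h : (enhancedPowerGraph G).Adj x y) :
    Subgroup.zpowers x = Subgroup.zpowers y := by
  obtain ⟨hne, hcyc⟩ := h
  obtain ⟨w, hwH, hHw⟩ := aux_exists_gen hcyc
  have hxH : x ∈ Subgroup.closure ({x, y} : Set G) :=
    Subgroup.subset_closure (Set.mem_insert x {y})
  have hyH : y ∈ Subgroup.closure ({x, y} : Set G) :=
    Subgroup.subset_closure (Set.mem_insert_of_mem x rfl)
  have hw1 : w ≠ 1 := by
    rintro rfl
    rw [Subgroup.zpowers_one_eq_bot] at hHw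
    exact hx (Subgroup.mem_bot.mp (hHw hxH))
  have hwp := hP w hw1
  have horder : ∀ a : G, a ≠ 1 → a ∈ Subgroup.closure ({x, y} : Set G) →
      Subgroup.zpowers a = Subgroup.zpowers w := by
    intro a ha haH
    have hmem : a ∈ Subgroup.zpowers w := hHw haH
    have hdvd : orderOf a ∣ orderOf w := orderOf_dvd_of_mem_zpowers hmem
    have hord : orderOf a = orderOf w := by
      rcases (Nat.Prime.eq_one_or_self_of_dvd hwp _ hdvd) with h1 | h1
      · exact absurd (orderOf_eq_one_iff.mp h1) ha
      · exact h1
    apply Subgroup.eq_of_le_of_card_ge (Subgroup.zpowers_le.mpr hmem)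
    rw [Nat.card_zpowers, Nat.card_zpowers, hord]
  rw [horder x hx hxH, horder y hy hyH]

private lemma aux_not_resolves_P (hP : ∀ g : G, g ≠ 1 → (orderOf g).Prime)
    {x y z : G} (hx : x ≠ 1) (hy : y ≠ 1) (hxy : x ≠ y)
    (hzx : z ≠ x) (hzy : z ≠ y) :
    ¬ StronglyResolves (enhancedPowerGraph G) z x y := by
  have key : ∀ a b c : G, a ≠ 1 → b ≠ 1 → a ≠ b → c ≠ a → c ≠ b →
      ¬ ∃ w : (enhancedPowerGraph G).Walk c a, w.IsPath ∧
        w.length = (enhancedPowerGraph G).dist c a ∧ b ∈ w.support := by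
    intro a b c ha hb hab hca hcb
    rintro ⟨w, hp, hl, hbs⟩
    have hd2 : (enhancedPowerGraph G).dist c a ≤ 2 := aux_dist_le_two c a
    have hlen : w.length = 0 ∨ w.length = 1 ∨ w.length = 2 := by omega
    rcases hlen with h0 | h1 | h2
    · exact hca (SimpleGraph.Walk.eq_of_length_eq_zero (p := w) h0)
    · obtain ⟨hs, -⟩ := aux_walk_length_one w h1
      rw [hs] at hbs
      simp only [List.mem_cons, List.mem_singleton, List.not_mem_nil, or_false] at hbs
      rcases hbs with rfl | rfl
      · exact hcb rfl
      · exact hab rfl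
    · obtain ⟨m, hs, ham, hma⟩ := aux_walk_length_two w h2
      rw [hs] at hbs
      simp only [List.mem_cons, List.not_mem_nil, or_false] at hbs
      have hnadj : ¬ (enhancedPowerGraph G).Adj c a := by
        intro hadj
        have := SimpleGraph.dist_eq_one_iff_adj.mpr hadj
        omega
      rcases hbs with rfl | rfl | rfl
      · exact hcb rfl
      · -- b = m : Adj c b and Adj b a
        have h1 : Subgroup.zpowers b = Subgroup.zpowers a :=
          aux_zpowers_eq_of_adj hP hb ha hma
        rcases eq_or_ne c 1 with rfl | hc1
        · exact hnadj (aux_adj_one (Ne.symm hca))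
        · have h2 : Subgroup.zpowers c = Subgroup.zpowers b :=
            aux_zpowers_eq_of_adj hP hc1 hb ham
          apply hnadj
          apply aux_adj_of_mem hca
          rw [h2, h1]
          exact Subgroup.mem_zpowers a
      · exact hab rfl
  rintro (h | h)
  · exact key x y z hx hy hxy hzx hzy h
  · exact key y x z hy hx hxy.symm hzy hzx h

end AuxCor46

/-- Corollary 4.6: (i) `sdim(𝒫_E(G)) = n - 1` iff `G` is cyclic;
(ii) if `G` is a non-cyclic `𝒫`-group then `sdim(𝒫_E(G)) = n - 2`. -/
theorem sdim_enhancedPowerGraph_cyclic_and_Pgroup (G : Type*) [Group G] [Fintype G] :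
    (sdim (enhancedPowerGraph G) = Fintype.card G - 1 ↔ IsCyclic G) ∧
    (¬IsCyclic G ∧ (∀ g : G, g ≠ 1 → (orderOf g).Prime) →
      sdim (enhancedPowerGraph G) = Fintype.card G - 2) := by
  classical
  set n := Fintype.card G with hn
  have hdef : sdim (enhancedPowerGraph G) =
      sInf {k | ∃ S : Finset G, S.card = k ∧
        IsStrongResolvingSet (enhancedPowerGraph G) ↑S} := rfl
  -- upper bound witness for the cyclic case
  have hupper_cyclic : (n - 1) ∈ {k | ∃ S : Finset G, S.card = k ∧
      IsStrongResolvingSet (enhancedPowerGraph G) ↑S} := by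
    refine ⟨Finset.univ.erase 1, ?_, ?_⟩
    · rw [Finset.card_erase_of_mem (Finset.mem_univ 1), Finset.card_univ]
    · intro x y hxy
      rcases eq_or_ne x 1 with rfl | hx
      · exact ⟨y, by simp [Ne.symm hxy], aux_resolve_right _ _⟩
      · exact ⟨x, by simp [hx], aux_resolve_left _ _⟩
  -- lower bound in the cyclic case
  have hlower_cyclic : IsCyclic G → ∀ k ∈ {k | ∃ S : Finset G, S.card = k ∧
      IsStrongResolvingSet (enhancedPowerGraph G) ↑S}, n - 1 ≤ k := by
    intro hc k hkK
    obtain ⟨S, hcard, hS⟩ := hkK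
    by_contra hlt
    push_neg at hlt
    have hcompl : 1 < Sᶜ.card := by
      rw [Finset.card_compl, hcard, ← hn]; omega
    obtain ⟨a, ha, b, hb, hab⟩ := Finset.one_lt_card.mp hcompl
    obtain ⟨z, hzS, hres⟩ := hS a b hab
    rw [Finset.mem_coe] at hzS
    have hza : z ≠ a := fun h => (Finset.mem_compl.mp ha) (h ▸ hzS)
    have hzb : z ≠ b := fun h => (Finset.mem_compl.mp hb) (h ▸ hzS)
    exact aux_not_resolves_complete hc hab hza hzb hres
  -- upper bound witness in the non-cyclic case
  have hupper_noncyc : ¬IsCyclic G → (n - 2) ∈ {k | ∃ S : Finset G, S.card = k ∧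
      IsStrongResolvingSet (enhancedPowerGraph G) ↑S} := by
    intro hnc
    have hstep : ¬ ∀ x y : G, x ≠ y → IsCyclic (Subgroup.closure ({x, y} : Set G)) :=
      fun h => hnc (aux_cyclic_of_complete h)
    push_neg at hstep
    obtain ⟨x, y, hxy, hncyc⟩ := hstep
    have hx1 : x ≠ 1 := by
      rintro rfl
      apply hncyc
      rw [Set.pair_comm, aux_closure_pair_eq (Subgroup.one_mem _)]
      exact aux_isCyclic_zpowers y
    have hy1 : y ≠ 1 := by
      rintro rfl
      apply hncyc
      rw [aux_closure_pair_eq (Subgroup.one_mem _)]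
      exact aux_isCyclic_zpowers x
    have hnadj : ¬ (enhancedPowerGraph G).Adj x y := fun h => hncyc h.2
    refine ⟨(Finset.univ.erase 1).erase x, ?_, ?_⟩
    · rw [Finset.card_erase_of_mem
        (Finset.mem_erase.mpr ⟨hx1, Finset.mem_univ x⟩),
        Finset.card_erase_of_mem (Finset.mem_univ 1), Finset.card_univ, ← hn]
      omega
    · intro a b hab
      by_cases haS : a ≠ x ∧ a ≠ 1
      · exact ⟨a, by simp [haS.1, haS.2], aux_resolve_left _ _⟩
      by_cases hbS : b ≠ x ∧ b ≠ 1
      · exact ⟨b, by simp [hbS.1, hbS.2], aux_resolve_right _ _⟩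
      push_neg at haS hbS
      have hres : ∃ w : (enhancedPowerGraph G).Walk y x, w.IsPath ∧
          w.length = (enhancedPowerGraph G).dist y x ∧ (1 : G) ∈ w.support := by
        have hyadj : (enhancedPowerGraph G).Adj y 1 := (aux_adj_one hy1).symm
        have h1x : (enhancedPowerGraph G).Adj 1 x := aux_adj_one hx1
        refine ⟨SimpleGraph.Walk.cons hyadj
          (SimpleGraph.Walk.cons h1x SimpleGraph.Walk.nil), ?_, ?_, ?_⟩
        · rw [SimpleGraph.Walk.isPath_def]
          simp [hy1, Ne.symm hx1, Ne.symm hxy]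
        · have hd2 : (enhancedPowerGraph G).dist y x ≤ 2 := aux_dist_le_two y x
          have hpos : 0 < (enhancedPowerGraph G).dist y x :=
            (aux_reachable y x).pos_dist_of_ne (Ne.symm hxy)
          have hne1 : (enhancedPowerGraph G).dist y x ≠ 1 := fun h =>
            hnadj (SimpleGraph.dist_eq_one_iff_adj.mp h).symm
          simp only [SimpleGraph.Walk.length_cons, SimpleGraph.Walk.length_nil]
          omega
        · simp
      refine ⟨y, by simp [hy1, Ne.symm hxy], ?_⟩
      rcases eq_or_ne a x with rfl | hax
      · -- a = x, so b = 1
        have hb1 : b = 1 := hbS (Ne.symm hab)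
        subst hb1
        exact Or.inl hres
      · have ha1 : a = 1 := haS hax
        subst ha1
        have hbx : b = x := by
          rcases eq_or_ne b x with h | h
          · exact h
          · exact absurd (hbS h) (Ne.symm hab)
        subst hbx
        exact Or.inr hres
  -- lower bound in the P-group case
  have hlower_P : (∀ g : G, g ≠ 1 → (orderOf g).Prime) →
      ∀ k ∈ {k | ∃ S : Finset G, S.card = k ∧
        IsStrongResolvingSet (enhancedPowerGraph G) ↑S}, n - 2 ≤ k := by
    intro hP k hkK
    obtain ⟨S, hcard, hS⟩ := hkK
    by_contra hlt
    push_neg at hlt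
    have hcompl : 2 < Sᶜ.card := by
      rw [Finset.card_compl, hcard, ← hn]; omega
    have h2 : 1 < (Sᶜ.erase 1).card := by
      have := Finset.pred_card_le_card_erase (s := Sᶜ) (a := (1 : G))
      omega
    obtain ⟨a, ha, b, hb, hab⟩ := Finset.one_lt_card.mp h2
    obtain ⟨ha1, haC⟩ := Finset.mem_erase.mp ha
    obtain ⟨hb1, hbC⟩ := Finset.mem_erase.mp hb
    obtain ⟨z, hzS, hres⟩ := hS a b hab
    rw [Finset.mem_coe] at hzS
    have hza : z ≠ a := fun h => (Finset.mem_compl.mp haC) (h ▸ hzS)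
    have hzb : z ≠ b := fun h => (Finset.mem_compl.mp hbC) (h ▸ hzS)
    exact aux_not_resolves_P hP ha1 hb1 hab hza hzb hres
  constructor
  · constructor
    · intro hsd
      by_contra hnc
      have hle : sdim (enhancedPowerGraph G) ≤ n - 2 := by
        rw [hdef]; exact Nat.sInf_le (hupper_noncyc hnc)
      have hn2 : 2 ≤ n := by
        by_contra hsmall
        push_neg at hsmall
        haveI : Subsingleton G :=
          Fintype.card_le_one_iff_subsingleton.mp (by omega)
        exact hnc (isCyclic_of_subsingleton)
      rw [hsd] at hle
      omega
    · intro hc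
      rw [hdef]
      exact le_antisymm (Nat.sInf_le hupper_cyclic)
        (le_csInf ⟨_, hupper_cyclic⟩ (hlower_cyclic hc))
  · rintro ⟨hnc, hP⟩
    rw [hdef]
    exact le_antisymm (Nat.sInf_le (hupper_noncyc hnc))
      (le_csInf ⟨_, hupper_noncyc hnc⟩ (hlower_P hP))
end

section
/- Let G be a finite group and g ∈ G. Then the ≡-class of g in the enhanced power graph 𝒫_E(G) equals 𝒞(g) := (⋂_{M ∈ ℳ_g} M) \ (⋃_{M ∈ ℳ_G∖ℳ_g} M). In particular, {x ∈ G : ⟨x⟩ = ⟨g⟩} ⊆ ḡ. -/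
section AuxEPG

variable {G : Type*} [Group G]

lemma isCyclic_of_le_epg {H M : Subgroup G} (hM : IsCyclic M) (h : H ≤ M) : IsCyclic H := by
  haveI := hM
  exact isCyclic_of_surjective (Subgroup.subgroupOfEquivOfLe h)
    (Subgroup.subgroupOfEquivOfLe h).surjective

lemma exists_zpowers_eq_epg {M : Subgroup G} (hM : IsCyclic M) :
    ∃ m ∈ M, M = Subgroup.zpowers m := by
  obtain ⟨⟨m, hm⟩, hgen⟩ := hM.exists_generator
  refine ⟨m, hm, le_antisymm (fun a ha => ?_) (Subgroup.zpowers_le.mpr hm)⟩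
  obtain ⟨k, hk⟩ := hgen ⟨a, ha⟩
  exact ⟨k, by simpa using congrArg Subtype.val hk⟩

lemma exists_maxCyclic_ge_epg [Finite G] {H : Subgroup G} (hH : IsCyclic H) :
    ∃ M, IsMaxCyclic M ∧ H ≤ M := by
  obtain ⟨M, hM, hmax⟩ := Set.Finite.exists_maximalFor id
    {N : Subgroup G | IsCyclic N ∧ H ≤ N} (Set.toFinite _) ⟨H, hH, le_rfl⟩
  exact ⟨M, ⟨hM.1, fun N hN hle => le_antisymm hle (hmax ⟨hN, le_trans hM.2 hle⟩ hle)⟩, hM.2⟩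

lemma zpowers_isCyclic_epg (y : G) : IsCyclic (Subgroup.zpowers y) := by
  refine ⟨⟨y, Subgroup.mem_zpowers y⟩, ?_⟩
  rintro ⟨z, hz⟩
  obtain ⟨k, hk⟩ := Subgroup.mem_zpowers_iff.mp hz
  exact ⟨k, Subtype.ext (by simpa using hk)⟩

lemma mem_closedNbhd_iff_epg [Finite G] (x y : G) :
    y ∈ closedNbhd (enhancedPowerGraph G) x ↔ ∃ M ∈ maxCyclicOn x, y ∈ M := by
  constructor
  · intro hy
    rcases hy with rfl | hy
    · obtain ⟨M, hM, hle⟩ := exists_maxCyclic_ge_epg (H := Subgroup.zpowers y)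
        (zpowers_isCyclic_epg y)
      exact ⟨M, ⟨hM, hle (Subgroup.mem_zpowers y)⟩, hle (Subgroup.mem_zpowers y)⟩
    · obtain ⟨M, hM, hle⟩ := exists_maxCyclic_ge_epg hy.2
      exact ⟨M, ⟨hM, hle (Subgroup.subset_closure (by simp))⟩,
        hle (Subgroup.subset_closure (by simp))⟩
  · rintro ⟨M, ⟨hM, hx⟩, hy⟩
    by_cases hxy : x = y
    · exact hxy ▸ Set.mem_insert _ _
    · refine Set.mem_insert_iff.mpr (Or.inr ⟨hxy, isCyclic_of_le_epg hM.1 ?_⟩)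
      rw [Subgroup.closure_le]
      rintro z (rfl | rfl) <;> assumption

lemma closedNbhd_eq_iff_epg [Finite G] (x g : G) :
    closedNbhd (enhancedPowerGraph G) x = closedNbhd (enhancedPowerGraph G) g ↔
      maxCyclicOn x = maxCyclicOn g := by
  constructor
  · intro h
    have key : ∀ a b : G,
        closedNbhd (enhancedPowerGraph G) a = closedNbhd (enhancedPowerGraph G) b →
        maxCyclicOn a ⊆ maxCyclicOn b := by
      intro a b hab M hMa
      obtain ⟨m, hmM, hMeq⟩ := exists_zpowers_eq_epg hMa.1.1
      have hm : m ∈ closedNbhd (enhancedPowerGraph G) a :=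
        (mem_closedNbhd_iff_epg a m).mpr ⟨M, hMa, hmM⟩
      rw [hab] at hm
      obtain ⟨N, hN, hmN⟩ := (mem_closedNbhd_iff_epg b m).mp hm
      have hle : M ≤ N := hMeq ▸ Subgroup.zpowers_le.mpr hmN
      have heq := hMa.1.2 N hN.1.1 hle
      exact ⟨hMa.1, heq ▸ hN.2⟩
    exact Set.Subset.antisymm (key x g h) (key g x h.symm)
  · intro h
    ext y
    rw [mem_closedNbhd_iff_epg, mem_closedNbhd_iff_epg, h]

end AuxEPG

/-- Lemma 4.1: the `≡`-class of `g` in `𝒫_E(G)` equals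
`𝒞(g) = (⋂_{M ∈ ℳ_g} M) \ (⋃_{M ∈ ℳ_G ∖ ℳ_g} M)`; in particular it contains
`{x : ⟨x⟩ = ⟨g⟩}`. -/
theorem equivClass_enhancedPowerGraph_eq (G : Type*) [Group G] [Fintype G] (g : G) :
    {x : G | closedNbhd (enhancedPowerGraph G) x = closedNbhd (enhancedPowerGraph G) g} =
      (⋂ M ∈ maxCyclicOn g, (M : Set G)) \
        (⋃ M ∈ {M : Subgroup G | IsMaxCyclic M} \ maxCyclicOn g, (M : Set G)) ∧
    {x : G | Subgroup.zpowers x = Subgroup.zpowers g} ⊆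
      {x : G | closedNbhd (enhancedPowerGraph G) x = closedNbhd (enhancedPowerGraph G) g} := by
  constructor
  · ext x
    rw [Set.mem_setOf_eq, closedNbhd_eq_iff_epg, Set.mem_diff]
    constructor
    · intro h
      constructor
      · rw [Set.mem_iInter₂]
        intro M hM
        exact (show M ∈ maxCyclicOn x from h ▸ hM).2
      · intro hmem
        rw [Set.mem_iUnion₂] at hmem
        obtain ⟨M, ⟨hMc, hMg⟩, hxM⟩ := hmem
        exact hMg (h ▸ (⟨hMc, hxM⟩ : M ∈ maxCyclicOn x))
    · rintro ⟨h1, h2⟩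
      rw [Set.mem_iInter₂] at h1
      ext M
      constructor
      · rintro ⟨hMc, hxM⟩
        by_contra hMg
        exact h2 (Set.mem_iUnion₂.mpr ⟨M, ⟨hMc, hMg⟩, hxM⟩)
      · rintro hM
        exact ⟨hM.1, h1 M hM⟩
  · intro x hx
    simp only [Set.mem_setOf_eq] at hx ⊢
    rw [closedNbhd_eq_iff_epg]
    ext M
    simp only [maxCyclicOn, Set.mem_setOf_eq, and_congr_right_iff]
    intro _
    rw [← Subgroup.zpowers_le, hx, Subgroup.zpowers_le]
end

section
/- Let G be a finite group. Then the clique number of the reduced power graph satisfies ω(𝒫_R(G)) = max{Ω(m) : m ∈ π_e(G)} + 1. -/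
lemma bigOmega_lt_of_dvd {a b : ℕ} (h : a ∣ b) (hne : a ≠ b) (hb : b ≠ 0) :
    bigOmega a < bigOmega b := by
  obtain ⟨c, rfl⟩ := h
  have ha : a ≠ 0 := fun h => hb (by simp [h])
  have hc : c ≠ 0 := fun h => hb (by simp [h])
  have hc1 : c ≠ 1 := fun h => hne (by simp [h])
  have hlen : bigOmega (a * c) = bigOmega a + bigOmega c := by
    have := (Nat.perm_primeFactorsList_mul ha hc).length_eq
    simpa [bigOmega, List.length_append] using this
  have hcpos : 0 < bigOmega c := by
    rcases Nat.exists_prime_and_dvd hc1 with ⟨p, hp, hpd⟩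
    have : p ∈ c.primeFactorsList := (Nat.mem_primeFactorsList hc).2 ⟨hp, hpd⟩
    exact List.length_pos_iff.2 (List.ne_nil_of_mem this)
  omega

lemma zpowers_lt_bigOmega {G : Type*} [Group G] [Fintype G] {x y : G}
    (h : Subgroup.zpowers x < Subgroup.zpowers y) :
    bigOmega (orderOf x) < bigOmega (orderOf y) := by
  have hdvd : orderOf x ∣ orderOf y := by
    rw [← Nat.card_zpowers, ← Nat.card_zpowers]
    exact Subgroup.card_dvd_of_le h.le
  have hne : orderOf x ≠ orderOf y := by
    intro he
    refine h.ne (Subgroup.eq_of_le_of_card_ge h.le ?_)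
    rw [Nat.card_zpowers, Nat.card_zpowers, he]
  exact bigOmega_lt_of_dvd hdvd hne (orderOf_pos y).ne'

/-- Lemma 5.4: `ω(𝒫_R(G)) = max{Ω(m) : m ∈ π_e(G)} + 1`. -/
theorem cliqueNum_reducedPowerGraph (G : Type*) [Group G] [Fintype G] :
    (reducedPowerGraph G).cliqueNum =
      sSup (bigOmega '' Set.range (orderOf : G → ℕ)) + 1 := by
  classical
  set S : Set ℕ := bigOmega '' Set.range (orderOf : G → ℕ) with hS
  have hSfin : S.Finite := (Set.finite_range _).image _
  have hSne : S.Nonempty := ⟨bigOmega (orderOf (1 : G)), ⟨orderOf (1 : G), ⟨1, rfl⟩, rfl⟩⟩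
  have hbdd : BddAbove S := hSfin.bddAbove
  set k := sSup S with hk
  have hle : ∀ x : G, bigOmega (orderOf x) ≤ k :=
    fun x => le_csSup hbdd ⟨orderOf x, ⟨x, rfl⟩, rfl⟩
  obtain ⟨m, hm, hgk⟩ := Nat.sSup_mem hSne hbdd
  obtain ⟨g, rfl⟩ := hm
  -- hgk : bigOmega (orderOf g) = k
  have hub : ∀ n ∈ {n | ∃ s, (reducedPowerGraph G).IsNClique n s}, n ≤ k + 1 := by
    rintro n ⟨s, hclique⟩
    have hinj : Set.InjOn (fun x : G => bigOmega (orderOf x)) (s : Set G) := by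
      intro x hx y hy hxy
      by_contra hne
      rcases hclique.1 hx hy hne with h | h
      · exact absurd hxy (zpowers_lt_bigOmega h).ne
      · exact absurd hxy.symm (zpowers_lt_bigOmega h).ne
    calc n = s.card := hclique.2.symm
      _ = (s.image (fun x => bigOmega (orderOf x))).card :=
          (Finset.card_image_of_injOn hinj).symm
      _ ≤ (Finset.range (k + 1)).card := by
          refine Finset.card_le_card ?_
          intro m hm
          simp only [Finset.mem_image, Finset.mem_range] at hm ⊢
          obtain ⟨x, _, rfl⟩ := hm
          exact Nat.lt_succ_of_le (hle x)
      _ = k + 1 := Finset.card_range _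
  -- lower bound: construct a clique of size k+1
  set nn := orderOf g with hnn
  have hn0 : nn ≠ 0 := (orderOf_pos g).ne'
  set L := nn.primeFactorsList with hL
  have hLk : L.length = k := hgk
  set d : ℕ → ℕ := fun i => (L.take i).prod with hd
  have hdn : ∀ i, d i ∣ nn := by
    intro i
    have : L.prod = nn := Nat.prod_primeFactorsList hn0
    rw [← this, ← List.take_append_drop i L, List.prod_append]
    exact Dvd.intro _ rfl
  have hd0 : ∀ i, d i ≠ 0 := fun i => ne_zero_of_dvd_ne_zero hn0 (hdn i)
  have hdij : ∀ i j, i < j → j ≤ k → d i ∣ d j ∧ d i ≠ d j := by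
    intro i j hij hjk
    have hsplit : L.take j = L.take i ++ (L.drop i).take (j - i) := by
      rw [← List.take_add]
      congr 1
      omega
    have hmul : d j = d i * ((L.drop i).take (j - i)).prod := by
      rw [hd]; simp only; rw [hsplit, List.prod_append]
    refine ⟨⟨_, hmul⟩, ?_⟩
    intro he
    have hm1 : ((L.drop i).take (j - i)).prod = 1 := by
      have h2 : d i * 1 = d i * ((L.drop i).take (j - i)).prod := by
        rw [mul_one]; exact he.trans hmul
      exact (Nat.eq_of_mul_eq_mul_left (Nat.pos_of_ne_zero (hd0 i)) h2).symm
    have hne2 : ((L.drop i).take (j - i)) ≠ [] := by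
      intro hnil
      have hlen : ((L.drop i).take (j - i)).length = 0 := by rw [hnil]; rfl
      rw [List.length_take, List.length_drop, hLk] at hlen
      omega
    obtain ⟨p, hp⟩ := List.exists_mem_of_ne_nil _ hne2
    have hpL : p ∈ L := List.drop_subset i L (List.take_subset _ _ hp)
    have hpprime : p.Prime := Nat.prime_of_mem_primeFactorsList hpL
    have : p ∣ 1 := hm1 ▸ List.dvd_prod hp
    exact Nat.Prime.one_lt hpprime |>.ne' (Nat.eq_one_of_dvd_one this) |>.elim
  -- orders of the chain elements
  have horder : ∀ i, orderOf (g ^ d i) = nn / d i := fun i =>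
    orderOf_pow_of_dvd (hd0 i) (hdn i)
  have hdivne : ∀ i j, i < j → j ≤ k → nn / d i ≠ nn / d j := by
    intro i j hij hjk he
    obtain ⟨hdvd, hne⟩ := hdij i j hij hjk
    have h1 : nn / d i * d i = nn := Nat.div_mul_cancel (hdn i)
    have h2 : nn / d j * d j = nn := Nat.div_mul_cancel (hdn j)
    have hpos : 0 < nn / d i := Nat.div_pos (Nat.le_of_dvd (Nat.pos_of_ne_zero hn0) (hdn i))
      (Nat.pos_of_ne_zero (hd0 i))
    rw [he] at h1
    exact hne (Nat.eq_of_mul_eq_mul_left (he ▸ hpos) (h1.trans h2.symm))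
  have key : ∀ i j, i < j → j ≤ k →
      Subgroup.zpowers (g ^ d j) < Subgroup.zpowers (g ^ d i) := by
    intro i j hij hjk
    obtain ⟨⟨c, hc⟩, -⟩ := hdij i j hij hjk
    have hle2 : Subgroup.zpowers (g ^ d j) ≤ Subgroup.zpowers (g ^ d i) := by
      rw [Subgroup.zpowers_le, hc, pow_mul]
      exact Subgroup.pow_mem _ (Subgroup.mem_zpowers _) c
    refine lt_of_le_of_ne hle2 ?_
    intro heq
    have hcard : Nat.card (Subgroup.zpowers (g ^ d j)) = Nat.card (Subgroup.zpowers (g ^ d i)) := by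
      rw [heq]
    rw [Nat.card_zpowers, Nat.card_zpowers, horder, horder] at hcard
    exact hdivne i j hij hjk hcard.symm
  -- the clique
  have hmemclique : (k + 1) ∈ {n | ∃ s, (reducedPowerGraph G).IsNClique n s} := by
    refine ⟨(Finset.range (k + 1)).image (fun i => g ^ d i), ?_, ?_⟩
    · intro x hx y hy hxy
      simp only [Finset.coe_image, Set.mem_image, Finset.mem_coe, Finset.mem_range] at hx hy
      obtain ⟨i, hi, rfl⟩ := hx
      obtain ⟨j, hj, rfl⟩ := hy
      rcases lt_trichotomy i j with h | h | h
      · exact Or.inr (key i j h (by omega))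
      · exact absurd (h ▸ rfl) hxy
      · exact Or.inl (key j i h (by omega))
    · rw [Finset.card_image_of_injOn, Finset.card_range]
      intro i hi j hj hij
      simp only [Finset.coe_range, Set.mem_Iio] at hi hj
      by_contra hne
      have horder_ne : orderOf (g ^ d i) ≠ orderOf (g ^ d j) := by
        rw [horder, horder]
        rcases lt_or_gt_of_ne hne with h | h
        · exact hdivne i j h (by omega)
        · intro he
          exact hdivne j i h (by omega) he.symm
      exact horder_ne (congrArg orderOf hij)
  exact IsGreatest.csSup_eq ⟨hmemclique, hub⟩
end

section
/- Let G be a finite group of order n ≥ 3. Then the following are equivalent: (a) sdim(𝒫_R(G)) = n − 2; (b) the reduced graph ℛ_{𝒫_R(G)} is a star; (c) G is isomorphic to ℤ_4, to Q_8, or to a 𝒫-group. -/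
/-- A star: one center vertex adjacent to all other vertices, and every edge
contains the center (equivalently, a tree with one vertex of degree `n - 1`
and all other vertices of degree `1`). -/
def IsStar {V : Type*} (Γ : SimpleGraph V) : Prop :=
  ∃ c : V, (∀ v : V, v ≠ c → Γ.Adj c v) ∧ ∀ u v : V, Γ.Adj u v → u = c ∨ v = c

open Subgroup SimpleGraph
set_option linter.unusedSectionVars false

namespace SdimAux

section GraphPart

variable {G : Type*} [Group G] [Fintype G]

lemma mem_closedNbhd {V : Type*} {Γ : SimpleGraph V} {x y : V} :
    y ∈ closedNbhd Γ x ↔ y = x ∨ Γ.Adj x y := by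
  simp [closedNbhd]

lemma rpg_adj_one {x : G} (hx : x ≠ 1) : (reducedPowerGraph G).Adj 1 x :=
  Or.inl (by
    rw [Subgroup.zpowers_one_eq_bot, bot_lt_iff_ne_bot, ne_eq, Subgroup.zpowers_eq_bot]
    exact hx)

lemma closedNbhd_one : closedNbhd (reducedPowerGraph G) 1 = Set.univ := by
  ext y
  simp only [Set.mem_univ, iff_true, mem_closedNbhd]
  by_cases h : y = 1
  · exact Or.inl h
  · exact Or.inr (rpg_adj_one h)

lemma rpg_reachable (x y : G) : (reducedPowerGraph G).Reachable x y := by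
  by_cases hxy : x = y
  · exact hxy ▸ Reachable.refl x
  by_cases hx : x = 1
  · subst hx; exact (rpg_adj_one (fun h => hxy h.symm)).reachable
  by_cases hy : y = 1
  · subst hy; exact ((rpg_adj_one hx).symm).reachable
  · exact ((rpg_adj_one hx).symm.reachable).trans (rpg_adj_one hy).reachable

lemma rpg_dist_le_two (x y : G) : (reducedPowerGraph G).dist x y ≤ 2 := by
  by_cases hxy : x = y
  · subst hxy; simp [SimpleGraph.dist_self]
  by_cases hadj : (reducedPowerGraph G).Adj x y
  · have := SimpleGraph.dist_le hadj.toWalk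
    simp only [Walk.length_cons, Walk.length_nil] at this
    omega
  · have hx : x ≠ 1 := by rintro rfl; exact hadj (rpg_adj_one (fun h => hxy h.symm))
    have hy : y ≠ 1 := by rintro rfl; exact hadj ((rpg_adj_one hx).symm)
    have := SimpleGraph.dist_le
      (Walk.cons (rpg_adj_one hx).symm (Walk.cons (rpg_adj_one hy) Walk.nil))
    simpa using this

lemma rpg_dist_eq_two {x y : G} (hne : x ≠ y) (hnadj : ¬ (reducedPowerGraph G).Adj x y) :
    (reducedPowerGraph G).dist x y = 2 := by
  have h2 := rpg_dist_le_two x y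
  have h0 : (reducedPowerGraph G).dist x y ≠ 0 :=
    fun h => hne ((rpg_reachable x y).dist_eq_zero_iff.mp h)
  have h1 : (reducedPowerGraph G).dist x y ≠ 1 :=
    fun h => hnadj (SimpleGraph.dist_eq_one_iff_adj.mp h)
  omega

lemma exists_geodesic {V : Type*} {Γ : SimpleGraph V} {u v : V} (h : Γ.Reachable u v) :
    ∃ w : Γ.Walk u v, w.IsPath ∧ w.length = Γ.dist u v := by
  classical
  obtain ⟨w, hw⟩ := h.exists_walk_length_eq_dist
  exact ⟨w.bypass, w.bypass_isPath,
    le_antisymm (le_trans w.length_bypass_le hw.le) (SimpleGraph.dist_le _)⟩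

lemma resolves_of_eq_left {V : Type*} {Γ : SimpleGraph V} {z x y : V}
    (h : Γ.Reachable z y) (hz : z = x) : StronglyResolves Γ z x y := by
  obtain ⟨w, hp, hl⟩ := exists_geodesic h
  exact Or.inr ⟨w, hp, hl, hz ▸ w.start_mem_support⟩

lemma resolves_of_eq_right {V : Type*} {Γ : SimpleGraph V} {z x y : V}
    (h : Γ.Reachable z x) (hz : z = y) : StronglyResolves Γ z x y := by
  obtain ⟨w, hp, hl⟩ := exists_geodesic h
  exact Or.inl ⟨w, hp, hl, hz ▸ w.start_mem_support⟩

lemma dist_add_le_of_mem_support {V : Type*} {Γ : SimpleGraph V} {z x y : V}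
    (w : Γ.Walk z x) (hmem : y ∈ w.support) :
    Γ.dist z y + Γ.dist y x ≤ w.length := by
  classical
  have h1 := SimpleGraph.dist_le (w.takeUntil y hmem)
  have h2 := SimpleGraph.dist_le (w.dropUntil y hmem)
  have h3 : (w.takeUntil y hmem).length + (w.dropUntil y hmem).length = w.length := by
    have := congrArg Walk.length (w.take_spec hmem)
    rwa [Walk.length_append] at this
  omega

lemma resolver_eq_of_not_adj {x y z : G} (hne : x ≠ y)
    (hnadj : ¬ (reducedPowerGraph G).Adj x y)
    (h : StronglyResolves (reducedPowerGraph G) z x y) : z = x ∨ z = y := by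
  by_contra hc
  push_neg at hc
  obtain ⟨hzx, hzy⟩ := hc
  rcases h with ⟨w, _, hl, hmem⟩ | ⟨w, _, hl, hmem⟩
  · have hd := dist_add_le_of_mem_support w hmem
    rw [hl] at hd
    have hyx : (reducedPowerGraph G).dist y x = 2 :=
      rpg_dist_eq_two (Ne.symm hne) (fun h => hnadj h.symm)
    have hle := rpg_dist_le_two z x
    have h0 : (reducedPowerGraph G).dist z y = 0 := by omega
    exact hzy ((rpg_reachable z y).dist_eq_zero_iff.mp h0)
  · have hd := dist_add_le_of_mem_support w hmem
    rw [hl] at hd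
    have hxy : (reducedPowerGraph G).dist x y = 2 := rpg_dist_eq_two hne hnadj
    have hle := rpg_dist_le_two z y
    have h0 : (reducedPowerGraph G).dist z x = 0 := by omega
    exact hzx ((rpg_reachable z x).dist_eq_zero_iff.mp h0)

lemma resolver_eq_of_twin {x y z : G} (hadj : (reducedPowerGraph G).Adj x y)
    (hN : closedNbhd (reducedPowerGraph G) x = closedNbhd (reducedPowerGraph G) y)
    (h : StronglyResolves (reducedPowerGraph G) z x y) : z = x ∨ z = y := by
  by_contra hc
  push_neg at hc
  obtain ⟨hzx, hzy⟩ := hc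
  have hiff : (reducedPowerGraph G).Adj x z ↔ (reducedPowerGraph G).Adj y z := by
    constructor
    · intro hh
      have : z ∈ closedNbhd (reducedPowerGraph G) y := hN ▸ mem_closedNbhd.mpr (Or.inr hh)
      exact (mem_closedNbhd.mp this).resolve_left hzy
    · intro hh
      have : z ∈ closedNbhd (reducedPowerGraph G) x := hN.symm ▸ mem_closedNbhd.mpr (Or.inr hh)
      exact (mem_closedNbhd.mp this).resolve_left hzx
  rcases h with ⟨w, _, hl, hmem⟩ | ⟨w, _, hl, hmem⟩
  · have hd := dist_add_le_of_mem_support w hmem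
    rw [hl] at hd
    have hyx : (reducedPowerGraph G).dist y x = 1 :=
      SimpleGraph.dist_eq_one_iff_adj.mpr hadj.symm
    by_cases haz : (reducedPowerGraph G).Adj x z
    · have hzx1 : (reducedPowerGraph G).dist z x = 1 :=
        SimpleGraph.dist_eq_one_iff_adj.mpr haz.symm
      have h0 : (reducedPowerGraph G).dist z y = 0 := by omega
      exact hzy ((rpg_reachable z y).dist_eq_zero_iff.mp h0)
    · have hzx2 : (reducedPowerGraph G).dist z x = 2 :=
        rpg_dist_eq_two hzx (fun h => haz h.symm)
      have hzy0 : (reducedPowerGraph G).dist z y ≠ 0 :=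
        fun h => hzy ((rpg_reachable z y).dist_eq_zero_iff.mp h)
      have hzy1 : (reducedPowerGraph G).dist z y = 1 := by omega
      exact (hiff.not.mp haz) (SimpleGraph.dist_eq_one_iff_adj.mp hzy1).symm
  · have hd := dist_add_le_of_mem_support w hmem
    rw [hl] at hd
    have hxy1 : (reducedPowerGraph G).dist x y = 1 :=
      SimpleGraph.dist_eq_one_iff_adj.mpr hadj
    by_cases haz : (reducedPowerGraph G).Adj y z
    · have : (reducedPowerGraph G).dist z y = 1 :=
        SimpleGraph.dist_eq_one_iff_adj.mpr haz.symm
      have h0 : (reducedPowerGraph G).dist z x = 0 := by omega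
      exact hzx ((rpg_reachable z x).dist_eq_zero_iff.mp h0)
    · have hzy2 : (reducedPowerGraph G).dist z y = 2 :=
        rpg_dist_eq_two hzy (fun h => haz h.symm)
      have hzx0 : (reducedPowerGraph G).dist z x ≠ 0 :=
        fun h => hzx ((rpg_reachable z x).dist_eq_zero_iff.mp h)
      have hzx1 : (reducedPowerGraph G).dist z x = 1 := by omega
      exact (hiff.not.mpr haz) (SimpleGraph.dist_eq_one_iff_adj.mp hzx1).symm

end GraphPart

end SdimAux

namespace SdimAux

section GraphPart2

variable {G : Type*} [Group G] [Fintype G]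

/-- No triangle with pairwise distinct closed neighborhoods. -/
def NoTri (G : Type*) [Group G] : Prop :=
  ¬ ∃ x y z : G, (reducedPowerGraph G).Adj x y ∧ (reducedPowerGraph G).Adj x z ∧
      (reducedPowerGraph G).Adj y z ∧
      closedNbhd (reducedPowerGraph G) x ≠ closedNbhd (reducedPowerGraph G) y ∧
      closedNbhd (reducedPowerGraph G) x ≠ closedNbhd (reducedPowerGraph G) z ∧
      closedNbhd (reducedPowerGraph G) y ≠ closedNbhd (reducedPowerGraph G) z

lemma isStrongResolvingSet_compl [DecidableEq G] (C : Finset G)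
    (hC : ∀ x ∈ C, ∀ y ∈ C, x ≠ y → (reducedPowerGraph G).Adj x y ∧
      closedNbhd (reducedPowerGraph G) x ≠ closedNbhd (reducedPowerGraph G) y) :
    IsStrongResolvingSet (reducedPowerGraph G) ↑(Cᶜ) := by
  intro x y hxy
  by_cases hx : x ∈ C
  · by_cases hy : y ∈ C
    · obtain ⟨hadj, hNN⟩ := hC x hx y hy hxy
      have hex : ∃ z0 : G,
          (z0 ∈ closedNbhd (reducedPowerGraph G) x ∧ z0 ∉ closedNbhd (reducedPowerGraph G) y) ∨
          (z0 ∈ closedNbhd (reducedPowerGraph G) y ∧ z0 ∉ closedNbhd (reducedPowerGraph G) x) := by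
        by_contra hax
        push_neg at hax
        exact hNN (Set.ext fun t => ⟨(hax t).1, (hax t).2⟩)
      obtain ⟨z0, hz0⟩ := hex
      rcases hz0 with ⟨hz0x, hz0y⟩ | ⟨hz0y, hz0x⟩
      · -- z0 ∈ N[x] \ N[y] : walk z0 - x - y resolves (second disjunct)
        have hz0ney : z0 ≠ y := fun h => hz0y (h ▸ mem_closedNbhd.mpr (Or.inl rfl))
        have hz0nex : z0 ≠ x := fun h => hz0y (h ▸ mem_closedNbhd.mpr (Or.inr hadj.symm))
        have hadjxz0 : (reducedPowerGraph G).Adj x z0 :=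
          (mem_closedNbhd.mp hz0x).resolve_left hz0nex
        have hnadjyz0 : ¬ (reducedPowerGraph G).Adj y z0 :=
          fun h => hz0y (mem_closedNbhd.mpr (Or.inr h))
        have hz0C : z0 ∉ C := fun hmem =>
          hnadjyz0 ((hC z0 hmem y hy hz0ney).1).symm
        refine ⟨z0, Finset.mem_coe.mpr (Finset.mem_compl.mpr hz0C),
          Or.inr ⟨Walk.cons hadjxz0.symm (Walk.cons hadj Walk.nil), ?_, ?_, ?_⟩⟩
        · simp [Walk.isPath_def, hz0nex, hz0ney, hxy]
        · simp only [Walk.length_cons, Walk.length_nil]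
          exact (rpg_dist_eq_two hz0ney (fun h => hnadjyz0 h.symm)).symm
        · simp [Walk.support_cons]
      · -- z0 ∈ N[y] \ N[x] : walk z0 - y - x resolves (first disjunct)
        have hz0nex : z0 ≠ x := fun h => hz0x (h ▸ mem_closedNbhd.mpr (Or.inl rfl))
        have hz0ney : z0 ≠ y := fun h => hz0x (h ▸ mem_closedNbhd.mpr (Or.inr hadj))
        have hadjyz0 : (reducedPowerGraph G).Adj y z0 :=
          (mem_closedNbhd.mp hz0y).resolve_left hz0ney
        have hnadjxz0 : ¬ (reducedPowerGraph G).Adj x z0 :=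
          fun h => hz0x (mem_closedNbhd.mpr (Or.inr h))
        have hz0C : z0 ∉ C := fun hmem =>
          hnadjxz0 ((hC z0 hmem x hx hz0nex).1).symm
        refine ⟨z0, Finset.mem_coe.mpr (Finset.mem_compl.mpr hz0C),
          Or.inl ⟨Walk.cons hadjyz0.symm (Walk.cons hadj.symm Walk.nil), ?_, ?_, ?_⟩⟩
        · have hyx : y ≠ x := Ne.symm hxy
          simp [Walk.isPath_def, hz0nex, hz0ney, hyx]
        · simp only [Walk.length_cons, Walk.length_nil]
          exact (rpg_dist_eq_two hz0nex (fun h => hnadjxz0 h.symm)).symm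
        · simp [Walk.support_cons]
    · exact ⟨y, Finset.mem_coe.mpr (Finset.mem_compl.mpr hy),
        resolves_of_eq_right (rpg_reachable y x) rfl⟩
  · exact ⟨x, Finset.mem_coe.mpr (Finset.mem_compl.mpr hx),
      resolves_of_eq_left (rpg_reachable x y) rfl⟩

lemma compl_rainbow [DecidableEq G] (S : Finset G)
    (h : IsStrongResolvingSet (reducedPowerGraph G) ↑S) {x y : G}
    (hx : x ∉ S) (hy : y ∉ S) (hxy : x ≠ y) :
    (reducedPowerGraph G).Adj x y ∧
      closedNbhd (reducedPowerGraph G) x ≠ closedNbhd (reducedPowerGraph G) y := by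
  obtain ⟨z, hzS, hres⟩ := h x y hxy
  have hzS' : z ∈ S := Finset.mem_coe.mp hzS
  have hzx : z ≠ x := fun h => hx (h ▸ hzS')
  have hzy : z ≠ y := fun h => hy (h ▸ hzS')
  have hadj : (reducedPowerGraph G).Adj x y := by
    by_contra hnadj
    rcases resolver_eq_of_not_adj hxy hnadj hres with h | h
    · exact hzx h
    · exact hzy h
  refine ⟨hadj, fun hN => ?_⟩
  rcases resolver_eq_of_twin hadj hN hres with h | h
  · exact hzx h
  · exact hzy h

lemma exists_nonuniv (h3 : 3 ≤ Fintype.card G) :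
    ∃ w : G, closedNbhd (reducedPowerGraph G) w ≠ Set.univ := by
  by_contra hc
  push_neg at hc
  have hadj : ∀ x y : G, x ≠ y → (reducedPowerGraph G).Adj x y := by
    intro x y hxy
    have : y ∈ closedNbhd (reducedPowerGraph G) x := (hc x) ▸ Set.mem_univ y
    exact (mem_closedNbhd.mp this).resolve_left (Ne.symm hxy)
  obtain ⟨m, -, hm⟩ := Finset.exists_max_image (Finset.univ : Finset G) orderOf ⟨1, Finset.mem_univ 1⟩
  have hall : ∀ x : G, x ∈ zpowers m := by
    intro x
    by_cases hxm : x = m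
    · exact hxm ▸ mem_zpowers m
    rcases hadj x m hxm with hlt | hlt
    · exact hlt.le (mem_zpowers x)
    · exfalso
      have hle : orderOf m ≤ orderOf x := by
        rw [← Nat.card_zpowers, ← Nat.card_zpowers]
        exact Subgroup.card_le_of_le hlt.le
      have hge := hm x (Finset.mem_univ x)
      have heq : orderOf m = orderOf x := le_antisymm hle hge
      have : zpowers m = zpowers x := Subgroup.eq_of_le_of_card_ge hlt.le
        (by rw [Nat.card_zpowers, Nat.card_zpowers, heq])
      exact hlt.ne this
  have htop : zpowers m = ⊤ := by
    rw [Subgroup.eq_top_iff']; exact hall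
  have hcards : orderOf m = Fintype.card G := by
    rw [← Nat.card_zpowers, htop, Subgroup.card_top, Nat.card_eq_fintype_card]
  have hm2 : m⁻¹ ≠ m := by
    intro h
    have : m ^ 2 = 1 := by
      rw [pow_two]
      nth_rewrite 1 [← h]
      exact inv_mul_cancel m
    have := orderOf_dvd_iff_pow_eq_one.mpr this
    have := Nat.le_of_dvd (by norm_num) this
    omega
  rcases hadj m⁻¹ m hm2 with hlt | hlt
  · rw [Subgroup.zpowers_inv] at hlt; exact lt_irrefl _ hlt
  · rw [Subgroup.zpowers_inv] at hlt; exact lt_irrefl _ hlt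

lemma sdim_eq_iff (h3 : 3 ≤ Fintype.card G) :
    sdim (reducedPowerGraph G) = Fintype.card G - 2 ↔ NoTri G := by
  classical
  constructor
  · intro hs
    by_contra hnt
    obtain ⟨x, y, z, hxy, hxz, hyz, nxy, nxz, nyz⟩ := not_not.mp hnt
    have hnexy : x ≠ y := fun h => nxy (h ▸ rfl)
    have hnexz : x ≠ z := fun h => nxz (h ▸ rfl)
    have hneyz : y ≠ z := fun h => nyz (h ▸ rfl)
    set C : Finset G := {x, y, z} with hCdef
    have hcard : C.card = 3 := by
      rw [hCdef, Finset.card_insert_of_notMem (by simp [hnexy, hnexz]),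
        Finset.card_insert_of_notMem (by simp [hneyz]), Finset.card_singleton]
    have hC : ∀ a ∈ C, ∀ b ∈ C, a ≠ b → (reducedPowerGraph G).Adj a b ∧
        closedNbhd (reducedPowerGraph G) a ≠ closedNbhd (reducedPowerGraph G) b := by
      intro a ha b hb hab
      simp only [hCdef, Finset.mem_insert, Finset.mem_singleton] at ha hb
      rcases ha with rfl | rfl | rfl <;> rcases hb with rfl | rfl | rfl
      · exact absurd rfl hab
      · exact ⟨hxy, nxy⟩
      · exact ⟨hxz, nxz⟩
      · exact ⟨hxy.symm, Ne.symm nxy⟩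
      · exact absurd rfl hab
      · exact ⟨hyz, nyz⟩
      · exact ⟨hxz.symm, Ne.symm nxz⟩
      · exact ⟨hyz.symm, Ne.symm nyz⟩
      · exact absurd rfl hab
    have hmem : Fintype.card G - 3 ∈
        {k | ∃ S : Finset G, S.card = k ∧ IsStrongResolvingSet (reducedPowerGraph G) ↑S} :=
      ⟨Cᶜ, by rw [Finset.card_compl, hcard], isStrongResolvingSet_compl C hC⟩
    have hdown : sdim (reducedPowerGraph G) ≤ Fintype.card G - 3 := Nat.sInf_le hmem
    omega
  · intro hnt
    obtain ⟨w, hwU⟩ := exists_nonuniv h3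
    have hw1 : w ≠ 1 := fun h => hwU (h ▸ closedNbhd_one)
    set C : Finset G := {1, w} with hCdef
    have hcard : C.card = 2 := by
      rw [hCdef, Finset.card_insert_of_notMem (by simp [Ne.symm hw1]), Finset.card_singleton]
    have hC : ∀ a ∈ C, ∀ b ∈ C, a ≠ b → (reducedPowerGraph G).Adj a b ∧
        closedNbhd (reducedPowerGraph G) a ≠ closedNbhd (reducedPowerGraph G) b := by
      intro a ha b hb hab
      simp only [hCdef, Finset.mem_insert, Finset.mem_singleton] at ha hb
      rcases ha with rfl | rfl <;> rcases hb with rfl | rfl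
      · exact absurd rfl hab
      · exact ⟨rpg_adj_one hw1, by rw [closedNbhd_one]; exact fun h => hwU h.symm⟩
      · exact ⟨(rpg_adj_one hw1).symm, by rw [closedNbhd_one]; exact hwU⟩
      · exact absurd rfl hab
    have hmem : Fintype.card G - 2 ∈
        {k | ∃ S : Finset G, S.card = k ∧ IsStrongResolvingSet (reducedPowerGraph G) ↑S} :=
      ⟨Cᶜ, by rw [Finset.card_compl, hcard], isStrongResolvingSet_compl C hC⟩
    have hub : sdim (reducedPowerGraph G) ≤ Fintype.card G - 2 := Nat.sInf_le hmem
    have hlb : Fintype.card G - 2 ≤ sdim (reducedPowerGraph G) := by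
      apply le_csInf ⟨_, hmem⟩
      rintro k ⟨S, hcardS, hres⟩
      have hcompl : Sᶜ.card ≤ 2 := by
        by_contra hbig
        push_neg at hbig
        obtain ⟨T, hTsub, hTcard⟩ := Finset.exists_subset_card_eq (s := Sᶜ) (n := 3) hbig
        obtain ⟨a, b, c, hab, hac, hbc, rfl⟩ := Finset.card_eq_three.mp hTcard
        have haS : a ∉ S := Finset.mem_compl.mp (hTsub (by simp))
        have hbS : b ∉ S := Finset.mem_compl.mp (hTsub (by simp))
        have hcS : c ∉ S := Finset.mem_compl.mp (hTsub (by simp))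
        obtain ⟨h1, n1⟩ := compl_rainbow S hres haS hbS hab
        obtain ⟨h2, n2⟩ := compl_rainbow S hres haS hcS hac
        obtain ⟨h3', n3⟩ := compl_rainbow S hres hbS hcS hbc
        exact hnt ⟨a, b, c, h1, h2, h3', n1, n2, n3⟩
      have hsum := Finset.card_add_card_compl S
      have hkle : k ≤ Fintype.card G := hcardS ▸ S.card_le_univ
      omega
    exact le_antisymm hub hlb

lemma mk_eq {V : Type*} {Γ : SimpleGraph V} {a b : V}
    (h : closedNbhd Γ a = closedNbhd Γ b) :
    Quotient.mk (nbhdSetoid Γ) a = Quotient.mk (nbhdSetoid Γ) b := by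
  exact Quotient.sound h

lemma isStar_iff :
    IsStar (reducedGraph (reducedPowerGraph G)) ↔ NoTri G := by
  constructor
  · rintro ⟨c, -, hc2⟩ ⟨x, y, z, hxy, hxz, hyz, nxy, nxz, nyz⟩
    have exy : (reducedGraph (reducedPowerGraph G)).Adj
        (Quotient.mk (nbhdSetoid (reducedPowerGraph G)) x)
        (Quotient.mk (nbhdSetoid (reducedPowerGraph G)) y) :=
      ⟨fun h => nxy (Quotient.exact h), x, y, rfl, rfl, hxy⟩
    have exz : (reducedGraph (reducedPowerGraph G)).Adj
        (Quotient.mk (nbhdSetoid (reducedPowerGraph G)) x)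
        (Quotient.mk (nbhdSetoid (reducedPowerGraph G)) z) :=
      ⟨fun h => nxz (Quotient.exact h), x, z, rfl, rfl, hxz⟩
    have eyz : (reducedGraph (reducedPowerGraph G)).Adj
        (Quotient.mk (nbhdSetoid (reducedPowerGraph G)) y)
        (Quotient.mk (nbhdSetoid (reducedPowerGraph G)) z) :=
      ⟨fun h => nyz (Quotient.exact h), y, z, rfl, rfl, hyz⟩
    rcases hc2 _ _ exy with h1 | h1
    · rcases hc2 _ _ eyz with h2 | h2
      · exact nxy (Quotient.exact (h1.trans h2.symm))
      · exact nxz (Quotient.exact (h1.trans h2.symm))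
    · rcases hc2 _ _ exz with h2 | h2
      · exact nxy (Quotient.exact (h2.trans h1.symm))
      · exact nyz (Quotient.exact (h1.trans h2.symm))
  · intro hnt
    refine ⟨Quotient.mk (nbhdSetoid (reducedPowerGraph G)) 1, ?_, ?_⟩
    · intro v hv
      obtain ⟨x, rfl⟩ := Quotient.exists_rep v
      have hx1 : x ≠ 1 := by rintro rfl; exact hv rfl
      exact ⟨Ne.symm hv, 1, x, rfl, rfl, rpg_adj_one hx1⟩
    · rintro u v ⟨huv, x0, y0, hx0, hy0, hadj0⟩
      by_contra hcon
      push_neg at hcon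
      obtain ⟨hu, hv⟩ := hcon
      have hx01 : x0 ≠ 1 := by rintro rfl; exact hu (hx0.symm)
      have hy01 : y0 ≠ 1 := by rintro rfl; exact hv (hy0.symm)
      refine hnt ⟨1, x0, y0, rpg_adj_one hx01, rpg_adj_one hy01, hadj0, ?_, ?_, ?_⟩
      · intro h; exact hu (hx0 ▸ mk_eq h.symm)
      · intro h; exact hv (hy0 ▸ mk_eq h.symm)
      · intro h; exact huv (hx0 ▸ hy0 ▸ mk_eq h)

end GraphPart2

end SdimAux

namespace SdimAux

section GroupPart

variable {G : Type*} [Group G] [Fintype G]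

/-- Key property: every non-identity element whose cyclic subgroup is properly contained in
another cyclic subgroup is universal in the reduced power graph. -/
def QProp (G : Type*) [Group G] : Prop :=
  ∀ y z : G, y ≠ 1 → zpowers y < zpowers z →
    closedNbhd (reducedPowerGraph G) y = Set.univ

lemma zpowers_lt_of_le {a b : G} (hle : zpowers a ≤ zpowers b) (h : orderOf a ≠ orderOf b) :
    zpowers a < zpowers b :=
  hle.lt_of_ne (fun he => h (by rw [← Nat.card_zpowers, ← Nat.card_zpowers, he]))

lemma zpowers_eq_of_le {a b : G} (hle : zpowers a ≤ zpowers b) (h : orderOf a = orderOf b) :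
    zpowers a = zpowers b :=
  Subgroup.eq_of_le_of_card_ge hle (by rw [Nat.card_zpowers, Nat.card_zpowers, h])

lemma chain_helper (hq : QProp G) {a b c : G} (hab : zpowers a < zpowers b)
    (hbc : zpowers b < zpowers c)
    (hN : closedNbhd (reducedPowerGraph G) a ≠ closedNbhd (reducedPowerGraph G) b) : False := by
  have hb1 : b ≠ 1 := by
    rintro rfl
    rw [zpowers_one_eq_bot] at hab
    exact not_lt_bot hab
  have hNb := hq b c hb1 hbc
  by_cases ha1 : a = 1
  · exact hN (by rw [ha1, closedNbhd_one, hNb])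
  · exact hN ((hq a b ha1 hab).trans hNb.symm)

lemma noTri_of_Q (hq : QProp G) : NoTri G := by
  rintro ⟨x, y, z, hxy, hxz, hyz, nxy, nxz, nyz⟩
  rcases hxy with h1 | h1 <;> rcases hxz with h2 | h2 <;> rcases hyz with h3 | h3
  · exact chain_helper hq h1 h3 nxy
  · exact chain_helper hq h2 h3 nxz
  · exact chain_helper hq h2 h1 (Ne.symm nxz)
  · exact chain_helper hq h2 h1 (Ne.symm nxz)
  · exact chain_helper hq h1 h2 (Ne.symm nxy)
  · exact chain_helper hq h2 h3 nxz
  · exact chain_helper hq h3 h2 nyz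
  · exact chain_helper hq h3 h1 (Ne.symm nyz)

lemma Q_of_P (hp : ∀ g : G, g ≠ 1 → (orderOf g).Prime) : QProp G := by
  intro y z hy hlt
  exfalso
  have hz1 : z ≠ 1 := by
    rintro rfl
    rw [zpowers_one_eq_bot] at hlt
    exact not_lt_bot hlt
  have hdvd : orderOf y ∣ orderOf z :=
    orderOf_dvd_of_mem_zpowers (Subgroup.zpowers_le.mp hlt.le)
  rcases (hp z hz1).eq_one_or_self_of_dvd _ hdvd with h | h
  · exact hy (orderOf_eq_one_iff.mp h)
  · exact hlt.ne (zpowers_eq_of_le hlt.le h)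

lemma dvd_four {d : ℕ} (h : d ∣ 4) : d = 1 ∨ d = 2 ∨ d = 4 := by
  have h1 := Nat.le_of_dvd (by norm_num) h
  obtain ⟨c, hc⟩ := h
  interval_cases d <;> omega

lemma Q_of_facts (h4 : ∀ g : G, g ^ 4 = 1)
    (huniq : ∀ g h : G, g ^ 2 = 1 → h ^ 2 = 1 → g ≠ 1 → h ≠ 1 → g = h) : QProp G := by
  intro y z hy hlt
  -- orderOf y = 2
  have hyd : orderOf y ∣ 4 := orderOf_dvd_iff_pow_eq_one.mpr (h4 y)
  have hzd : orderOf z ∣ 4 := orderOf_dvd_iff_pow_eq_one.mpr (h4 z)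
  have hydvdz : orderOf y ∣ orderOf z :=
    orderOf_dvd_of_mem_zpowers (Subgroup.zpowers_le.mp hlt.le)
  have hy2 : orderOf y = 2 := by
    rcases dvd_four hyd with h | h | h
    · exact absurd (orderOf_eq_one_iff.mp h) hy
    · exact h
    · exfalso
      rcases dvd_four hzd with h' | h' | h'
      · rw [h, h'] at hydvdz; exact absurd hydvdz (by norm_num)
      · rw [h, h'] at hydvdz; exact absurd hydvdz (by norm_num)
      · exact hlt.ne (zpowers_eq_of_le hlt.le (h.trans h'.symm))
  have hysq : y ^ 2 = 1 := by rw [← hy2]; exact pow_orderOf_eq_one y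
  -- universality
  apply Set.eq_univ_iff_forall.mpr
  intro h
  by_cases hhy : h = y
  · exact mem_closedNbhd.mpr (Or.inl hhy)
  by_cases hh1 : h = 1
  · refine mem_closedNbhd.mpr (Or.inr (Or.inr ?_))
    rw [hh1, zpowers_one_eq_bot, bot_lt_iff_ne_bot, ne_eq, Subgroup.zpowers_eq_bot]
    exact hy
  · have hhd : orderOf h ∣ 4 := orderOf_dvd_iff_pow_eq_one.mpr (h4 h)
    have hh4 : orderOf h = 4 := by
      rcases dvd_four hhd with h' | h' | h'
      · exact absurd (orderOf_eq_one_iff.mp h') hh1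
      · exfalso
        have hhsq : h ^ 2 = 1 := by rw [← h']; exact pow_orderOf_eq_one h
        exact hhy (huniq h y hhsq hysq hh1 hy)
      · exact h'
    -- h^2 = y, hence zpowers y < zpowers h
    have hhsq1 : (h ^ 2) ^ 2 = 1 := by rw [← pow_mul]; exact h4 h
    have hhsqne : h ^ 2 ≠ 1 := by
      intro hcon
      have := orderOf_dvd_iff_pow_eq_one.mpr hcon
      rw [hh4] at this
      exact absurd this (by norm_num)
    have hkey : h ^ 2 = y := huniq (h ^ 2) y hhsq1 hysq hhsqne hy
    have hmem : y ∈ zpowers h := hkey ▸ npow_mem_zpowers h 2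
    have hlt2 : zpowers y < zpowers h :=
      zpowers_lt_of_le (Subgroup.zpowers_le.mpr hmem) (by rw [hy2, hh4]; norm_num)
    exact mem_closedNbhd.mpr (Or.inr (Or.inl hlt2))

lemma Q_of_equiv {M : Type*} [Group M] (e : G ≃* M) (h4 : ∀ g : M, g ^ 4 = 1)
    (hu : ∀ g h : M, g ^ 2 = 1 → h ^ 2 = 1 → g ≠ 1 → h ≠ 1 → g = h) : QProp G := by
  apply Q_of_facts
  · intro g
    apply e.injective
    rw [map_pow, h4, map_one]
  · intro g h hg hh hg1 hh1
    apply e.injective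
    refine hu (e g) (e h) ?_ ?_ ?_ ?_
    · rw [← map_pow, hg, map_one]
    · rw [← map_pow, hh, map_one]
    · intro hc; exact hg1 (e.injective (by rw [hc, map_one]))
    · intro hc; exact hh1 (e.injective (by rw [hc, map_one]))

lemma zmod4_exp : ∀ g : Multiplicative (ZMod 4), g ^ 4 = 1 := by decide

lemma zmod4_uniq : ∀ g h : Multiplicative (ZMod 4),
    g ^ 2 = 1 → h ^ 2 = 1 → g ≠ 1 → h ≠ 1 → g = h := by decide

lemma quat_exp : ∀ g : QuaternionGroup 2, g ^ 4 = 1 := by decide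

lemma quat_uniq : ∀ g h : QuaternionGroup 2,
    g ^ 2 = 1 → h ^ 2 = 1 → g ≠ 1 → h ≠ 1 → g = h := by decide

end GroupPart

end SdimAux

namespace SdimAux

section Classify

variable {G : Type*} [Group G] [Fintype G]

lemma inv_notmem {v : G} (hv : v ^ 2 ≠ 1) :
    v⁻¹ ∉ closedNbhd (reducedPowerGraph G) v := by
  intro hmem
  rcases mem_closedNbhd.mp hmem with h | h
  · apply hv
    rw [pow_two]
    nth_rewrite 2 [← h]
    exact mul_inv_cancel v
  · rcases h with h | h
    · rw [Subgroup.zpowers_inv] at h; exact lt_irrefl _ h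
    · rw [Subgroup.zpowers_inv] at h; exact lt_irrefl _ h

lemma not_univ_of_sq {v : G} (hv : v ^ 2 ≠ 1) :
    closedNbhd (reducedPowerGraph G) v ≠ Set.univ := by
  intro h
  exact inv_notmem hv (by rw [h]; trivial)

lemma tri1 (hnt : NoTri G) {y z : G} (hy : y ≠ 1) (hlt : zpowers y < zpowers z) :
    closedNbhd (reducedPowerGraph G) y = Set.univ ∨
    closedNbhd (reducedPowerGraph G) z = Set.univ ∨
    closedNbhd (reducedPowerGraph G) y = closedNbhd (reducedPowerGraph G) z := by
  by_contra hc
  push_neg at hc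
  obtain ⟨h1, h2, h3⟩ := hc
  have hz1 : z ≠ 1 := by rintro rfl; rw [zpowers_one_eq_bot] at hlt; exact not_lt_bot hlt
  refine hnt ⟨1, y, z, rpg_adj_one hy, rpg_adj_one hz1, Or.inl hlt, ?_, ?_, h3⟩
  · rw [closedNbhd_one]; exact fun h => h1 h.symm
  · rw [closedNbhd_one]; exact fun h => h2 h.symm

lemma univ_of_lt (hnt : NoTri G) {u v : G} (hu : u ≠ 1) (hlt : zpowers u < zpowers v)
    (hv2 : v ^ 2 ≠ 1) : closedNbhd (reducedPowerGraph G) u = Set.univ := by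
  rcases tri1 hnt hu hlt with h | h | h
  · exact h
  · exact absurd h (not_univ_of_sq hv2)
  · exfalso
    have hadj : (reducedPowerGraph G).Adj u v⁻¹ :=
      Or.inl (by rw [Subgroup.zpowers_inv]; exact hlt)
    have hmem : v⁻¹ ∈ closedNbhd (reducedPowerGraph G) u := mem_closedNbhd.mpr (Or.inr hadj)
    rw [h] at hmem
    exact inv_notmem hv2 hmem

lemma exists_not_mem_of_card_lt (T : Finset G) (h : T.card < Fintype.card G) :
    ∃ x : G, x ∉ T := by
  by_contra hc
  push_neg at hc
  have hsub : (Finset.univ : Finset G) ⊆ T := fun x _ => hc x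
  have := Finset.card_le_card hsub
  rw [Finset.card_univ] at this
  omega

lemma powf {H : Type*} [Group H] {i : H} (hi : orderOf i = 4) (k l : ZMod 4) :
    i ^ (k + l).val = i ^ k.val * i ^ l.val := by
  have h1 : i ^ (k + l).val = i ^ ((k.val + l.val) % orderOf i) := by rw [ZMod.val_add, hi]
  rw [h1, pow_mod_orderOf, pow_add]

lemma cyclic_equiv {H : Type*} [Group H] [Fintype H] (hcard : Fintype.card H = 4)
    {i : H} (hi : orderOf i = 4) : Nonempty (H ≃* Multiplicative (ZMod 4)) := by
  have hmul : ∀ x y : Multiplicative (ZMod 4),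
      i ^ (Multiplicative.toAdd (x * y)).val
        = i ^ (Multiplicative.toAdd x).val * i ^ (Multiplicative.toAdd y).val := by
    intro x y
    exact powf hi _ _
  set F : Multiplicative (ZMod 4) →* H :=
    MonoidHom.mk' (fun x => i ^ (Multiplicative.toAdd x).val) hmul with hF
  have hinj : Function.Injective F := by
    intro x y h
    have hv : (Multiplicative.toAdd x).val = (Multiplicative.toAdd y).val := by
      apply pow_injOn_Iio_orderOf (x := i)
        (by rw [hi]; exact Set.mem_Iio.mpr (ZMod.val_lt _))
        (by rw [hi]; exact Set.mem_Iio.mpr (ZMod.val_lt _))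
      exact h
    exact Multiplicative.toAdd.injective (ZMod.val_injective 4 hv)
  have hbij : Function.Bijective F := by
    rw [Fintype.bijective_iff_injective_and_card]
    refine ⟨hinj, ?_⟩
    rw [hcard]
    simp
  exact ⟨(MulEquiv.ofBijective F hbij).symm⟩

lemma quat_equiv {H : Type*} [Group H] [Fintype H] (hcard : Fintype.card H = 8)
    {i j u : H} (hi : orderOf i = 4) (hiu : i ^ 2 = u) (hju : j ^ 2 = u)
    (hj : j ∉ zpowers i) (hrel : i * j = j * i⁻¹) :
    Nonempty (H ≃* QuaternionGroup 2) := by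
  have hi4 : i ^ 4 = 1 := by rw [← hi]; exact pow_orderOf_eq_one i
  have huu : u * u = 1 := by
    rw [← hiu, ← pow_add]
    exact hi4
  set f : ZMod 4 → H := fun k => i ^ k.val with hf
  have hfadd : ∀ k l, f (k + l) = f k * f l := powf hi
  have hf0 : f 0 = 1 := by simp [hf, ZMod.val_zero]
  have hfneg : ∀ k, f (-k) = (f k)⁻¹ := by
    intro k
    have h := hfadd k (-k)
    rw [add_neg_cancel, hf0] at h
    exact (inv_eq_of_mul_eq_one_right h.symm).symm
  have hfsub : ∀ k l, f (k - l) = f k * (f l)⁻¹ := by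
    intro k l; rw [sub_eq_add_neg, hfadd, hfneg]
  have hfcomm : ∀ k l, f k * f l = f l * f k := by
    intro k l; rw [← hfadd, ← hfadd, add_comm]
  have hcomm' : ∀ k l, (f k)⁻¹ * f l = f l * (f k)⁻¹ := by
    intro k l; rw [← hfneg, hfcomm, hfneg]
  have hrelm : ∀ m : ℕ, i ^ m * j = j * (i ^ m)⁻¹ := by
    intro m
    induction m with
    | zero => simp
    | succ t ih =>
      calc i ^ (t+1) * j = i ^ t * (i * j) := by rw [pow_succ, mul_assoc]
        _ = i ^ t * (j * i⁻¹) := by rw [hrel]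
        _ = (i ^ t * j) * i⁻¹ := by rw [mul_assoc]
        _ = j * (i ^ t)⁻¹ * i⁻¹ := by rw [ih]
        _ = j * ((i ^ t)⁻¹ * i⁻¹) := by rw [mul_assoc]
        _ = j * (i ^ (t+1))⁻¹ := by rw [← mul_inv_rev, ← pow_succ']
  have hfj : ∀ k, f k * j = j * (f k)⁻¹ := fun k => hrelm k.val
  have hf2 : f ((2 : ℕ) : ZMod 4) = u := by
    have hv : (((2 : ℕ) : ZMod 4)).val = 2 := by decide
    show i ^ (((2 : ℕ) : ZMod 4)).val = u
    rw [hv, hiu]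
  set φ : QuaternionGroup 2 → H := fun x => match x with
    | QuaternionGroup.a k => f k
    | QuaternionGroup.xa k => j * f k
    with hφ
  have hmul : ∀ x y : QuaternionGroup 2, φ (x * y) = φ x * φ y := by
    rintro (k | k) (l | l)
    · show f (k + l) = f k * f l
      exact hfadd k l
    · show j * f (l - k) = f k * (j * f l)
      calc j * f (l - k) = j * (f l * (f k)⁻¹) := by rw [hfsub]
        _ = j * ((f k)⁻¹ * f l) := by rw [hcomm']
        _ = (j * (f k)⁻¹) * f l := by rw [mul_assoc]
        _ = (f k * j) * f l := by rw [hfj]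
        _ = f k * (j * f l) := by rw [mul_assoc]
    · show j * f (k + l) = (j * f k) * f l
      rw [hfadd, mul_assoc]
    · show f (((2 : ℕ) : ZMod 4) + l - k) = (j * f k) * (j * f l)
      calc f (((2 : ℕ) : ZMod 4) + l - k)
          = f (((2 : ℕ) : ZMod 4) + l) * (f k)⁻¹ := by rw [hfsub]
        _ = (u * f l) * (f k)⁻¹ := by rw [hfadd, hf2]
        _ = u * (f l * (f k)⁻¹) := by rw [mul_assoc]
        _ = u * ((f k)⁻¹ * f l) := by rw [hcomm']
        _ = (j * j) * ((f k)⁻¹ * f l) := by rw [← pow_two, hju]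
        _ = j * (j * ((f k)⁻¹ * f l)) := by rw [mul_assoc]
        _ = j * ((j * (f k)⁻¹) * f l) := by rw [mul_assoc]
        _ = j * ((f k * j) * f l) := by rw [hfj]
        _ = (j * f k) * (j * f l) := by rw [mul_assoc, mul_assoc]
  have hfzp : ∀ k, f k ∈ zpowers i := fun k => npow_mem_zpowers i k.val
  have hfinj : ∀ k l : ZMod 4, f k = f l → k = l := by
    intro k l h
    apply ZMod.val_injective 4
    apply pow_injOn_Iio_orderOf (x := i)
      (by rw [hi]; exact Set.mem_Iio.mpr (ZMod.val_lt _))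
      (by rw [hi]; exact Set.mem_Iio.mpr (ZMod.val_lt _))
    exact h
  have hinj : Function.Injective φ := by
    rintro (k | k) (l | l) h
    · have h' : f k = f l := h
      rw [hfinj k l h']
    · exfalso
      have h' : f k = j * f l := h
      apply hj
      have hjj : j = f k * (f l)⁻¹ := by rw [h']; group
      rw [hjj]
      exact mul_mem (hfzp k) (inv_mem (hfzp l))
    · exfalso
      have h' : j * f k = f l := h
      apply hj
      have hjj : j = f l * (f k)⁻¹ := by rw [← h']; group
      rw [hjj]
      exact mul_mem (hfzp l) (inv_mem (hfzp k))
    · have h' : j * f k = j * f l := h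
      rw [hfinj k l (mul_left_cancel h')]
  have hbij : Function.Bijective φ := by
    rw [Fintype.bijective_iff_injective_and_card]
    refine ⟨hinj, ?_⟩
    rw [QuaternionGroup.card, hcard]
  exact ⟨(MulEquiv.ofBijective (MonoidHom.mk' φ hmul) hbij).symm⟩

lemma classify (hnt : NoTri G)
    {a : G} (ha1 : a ≠ 1) (hap : ¬ (orderOf a).Prime) :
    Nonempty (G ≃* Multiplicative (ZMod 4)) ∨ Nonempty (G ≃* QuaternionGroup 2) := by
  classical
  have hm0 : orderOf a ≠ 0 := (orderOf_pos a).ne'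
  have hm1 : orderOf a ≠ 1 := fun h => ha1 (orderOf_eq_one_iff.mp h)
  have hpp : (orderOf a).minFac.Prime := Nat.minFac_prime hm1
  have hpd : (orderOf a).minFac ∣ orderOf a := Nat.minFac_dvd _
  set u : G := a ^ (orderOf a / (orderOf a).minFac) with hudef
  have hou : orderOf u = (orderOf a).minFac := orderOf_pow_orderOf_div hm0 hpd
  have hu1 : u ≠ 1 := fun h => hpp.one_lt.ne' (by rw [← hou, h, orderOf_one])
  have hlta : zpowers u < zpowers a := by
    apply zpowers_lt_of_le (Subgroup.zpowers_le.mpr (npow_mem_zpowers a _))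
    rw [hou]
    intro he
    exact hap (he ▸ hpp)
  have ha2 : a ^ 2 ≠ 1 := by
    intro h
    have hd := orderOf_dvd_iff_pow_eq_one.mpr h
    rcases (Nat.prime_two.eq_one_or_self_of_dvd _ hd) with h' | h'
    · exact hm1 h'
    · exact hap (h' ▸ Nat.prime_two)
  have hNu : closedNbhd (reducedPowerGraph G) u = Set.univ := univ_of_lt hnt hu1 hlta ha2
  have huniqp : ∀ w : G, (orderOf w).Prime → w = u := by
    intro w hw
    have hwin : w ∈ closedNbhd (reducedPowerGraph G) u := by rw [hNu]; trivial
    rcases mem_closedNbhd.mp hwin with h | h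
    · exact h
    · exfalso
      rcases h with h | h
      · have hd : orderOf u ∣ orderOf w :=
          orderOf_dvd_of_mem_zpowers (Subgroup.zpowers_le.mp h.le)
        have heq : orderOf u = orderOf w := by
          rw [hou] at hd ⊢
          exact (Nat.prime_dvd_prime_iff_eq hpp hw).mp hd
        exact h.ne (zpowers_eq_of_le h.le heq)
      · have hd : orderOf w ∣ orderOf u :=
          orderOf_dvd_of_mem_zpowers (Subgroup.zpowers_le.mp h.le)
        have heq : orderOf w = orderOf u := by
          rw [hou] at hd ⊢
          exact (Nat.prime_dvd_prime_iff_eq hw hpp).mp hd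
        exact h.ne (zpowers_eq_of_le h.le heq)
  have hp2 : (orderOf a).minFac = 2 := by
    by_contra hne
    have hcop : (orderOf u).Coprime 2 := by
      rw [hou]
      exact (Nat.coprime_primes hpp Nat.prime_two).mpr hne
    have ho2 : orderOf (u ^ 2) = orderOf u := hcop.orderOf_pow
    have hequ := huniqp (u ^ 2) (by rw [ho2, hou]; exact hpp)
    have h2 : u * u = u * 1 := by
      rw [mul_one]
      rw [← pow_two]
      exact hequ
    exact hu1 (mul_left_cancel h2)
  have hou2 : orderOf u = 2 := by rw [hou, hp2]
  have husq : u ^ 2 = 1 := by rw [← hou2]; exact pow_orderOf_eq_one u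
  have huniqinv : ∀ g : G, g ^ 2 = 1 → g ≠ 1 → g = u := by
    intro g h2 h1
    apply huniqp
    have hd : orderOf g ∣ 2 := orderOf_dvd_iff_pow_eq_one.mpr h2
    rcases Nat.prime_two.eq_one_or_self_of_dvd _ hd with h' | h'
    · exact absurd (orderOf_eq_one_iff.mp h') h1
    · rw [h']; exact Nat.prime_two
  have hpf : ∀ h : G, ∀ q : ℕ, q.Prime → q ∣ orderOf h → q = 2 := by
    intro h q hq hd
    have h0 : orderOf h ≠ 0 := (orderOf_pos h).ne'
    have hoq : orderOf (h ^ (orderOf h / q)) = q := orderOf_pow_orderOf_div h0 hd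
    have heq := huniqp _ (hoq ▸ hq)
    rw [heq] at hoq
    rw [← hoq, hou2]
  have hexp : ∀ g : G, g ^ 4 = 1 := by
    by_contra hc
    push_neg at hc
    obtain ⟨h, hh⟩ := hc
    have hnd : ¬ orderOf h ∣ 4 := fun hd => hh (orderOf_dvd_iff_pow_eq_one.mp hd)
    have h0 : orderOf h ≠ 0 := (orderOf_pos h).ne'
    have hform := Nat.eq_prime_pow_of_unique_prime_dvd h0
      (fun {d} hd hdd => hpf h d hd hdd)
    set k := (orderOf h).primeFactorsList.length with hk
    have hk3 : 3 ≤ k := by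
      by_contra hkle
      push_neg at hkle
      apply hnd
      rw [hform]
      have hdd : (2:ℕ) ^ k ∣ 2 ^ 2 := pow_dvd_pow 2 (by omega)
      exact (by norm_num : (2:ℕ) ^ 2 = 4) ▸ hdd
    set u3 : G := h ^ (2 ^ (k - 3)) with hu3d
    have hdvd3 : (2:ℕ) ^ (k - 3) ∣ orderOf h := by
      rw [hform]; exact pow_dvd_pow 2 (by omega)
    have hou3 : orderOf u3 = 8 := by
      rw [hu3d, orderOf_pow_of_dvd (by positivity) hdvd3, hform,
        Nat.pow_div (by omega) (by norm_num)]
      rw [show k - (k-3) = 3 by omega]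
    set u2 : G := u3 ^ 2 with hu2d
    have hou2' : orderOf u2 = 4 := by
      rw [hu2d, orderOf_pow_of_dvd (by norm_num) (by rw [hou3]; norm_num), hou3]
    have hu2ne1 : u2 ≠ 1 := fun h' => by rw [h', orderOf_one] at hou2'; norm_num at hou2'
    have hlt23 : zpowers u2 < zpowers u3 :=
      zpowers_lt_of_le (Subgroup.zpowers_le.mpr (hu2d ▸ npow_mem_zpowers u3 2))
        (by rw [hou2', hou3]; norm_num)
    have hu3sq : u3 ^ 2 ≠ 1 := by
      intro h'
      have hdd := orderOf_dvd_iff_pow_eq_one.mpr h'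
      rw [hou3] at hdd; norm_num at hdd
    have huniv := univ_of_lt hnt hu2ne1 hlt23 hu3sq
    apply not_univ_of_sq (v := u2) ?_ huniv
    intro h'
    have hdd := orderOf_dvd_iff_pow_eq_one.mpr h'
    rw [hou2'] at hdd; norm_num at hdd
  have hoa4 : orderOf a = 4 := by
    have hd : orderOf a ∣ 4 := orderOf_dvd_iff_pow_eq_one.mpr (hexp a)
    rcases dvd_four hd with h | h | h
    · exact absurd h hm1
    · exact absurd (h ▸ Nat.prime_two) hap
    · exact h
  have hcent : ∀ g : G, u * g = g * u := by
    intro g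
    have h1 : (g * u * g⁻¹) ^ 2 = 1 := by
      have hcc : (g * u * g⁻¹) ^ 2 = g * u ^ 2 * g⁻¹ := by
        rw [pow_two, pow_two]
        simp only [mul_assoc, inv_mul_cancel_left]
      rw [hcc, husq, mul_one, mul_inv_cancel]
    have h2 : g * u * g⁻¹ ≠ 1 := by
      intro h'
      apply hu1
      have hcc := congrArg (fun t => g⁻¹ * t * g) h'
      simpa [mul_assoc] using hcc
    have h3 := huniqinv _ h1 h2
    have h4 : g * u = u * g := by
      have hcc := congrArg (fun t => t * g) h3
      simpa [mul_assoc] using hcc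
    exact h4.symm
  have huu1 : u * u = 1 := by rw [← pow_two]; exact husq
  have horder2 : ∀ g : G, g ≠ 1 → g ≠ u → g ^ 2 = u := by
    intro g h1 h2
    by_cases hsq : g ^ 2 = 1
    · exact absurd (huniqinv g hsq h1) h2
    · exact huniqinv (g ^ 2) (by rw [← pow_mul]; exact hexp g) hsq
  have hinvu : ∀ g : G, g ^ 2 = u → g⁻¹ = g * u := by
    intro g hg
    apply inv_eq_of_mul_eq_one_right
    rw [← mul_assoc, ← pow_two, hg, huu1]
  have hrule : ∀ x y : G, x ^ 2 = u → y ^ 2 = u → x * y ≠ 1 → x * y ≠ u → y * x = x * y * u := by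
    intro x y hx hy h1 h2
    have hsq : (x * y) ^ 2 = u := horder2 _ h1 h2
    have hxyxy : x * y * x * y = u := by
      have hcc := hsq
      rw [pow_two, ← mul_assoc] at hcc
      exact hcc
    have e0 : x * (y * x) * y = u := by
      rw [← mul_assoc x y x]
      exact hxyxy
    have hxi := hinvu x hx
    have hyi := hinvu y hy
    have estep : y * x = x⁻¹ * u * y⁻¹ := by
      rw [← e0, mul_assoc x (y*x) y, inv_mul_cancel_left, mul_inv_cancel_right]
    calc y * x = x⁻¹ * u * y⁻¹ := estep
      _ = (x * u) * u * (y * u) := by rw [hxi, hyi]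
      _ = x * (y * u) := by rw [mul_assoc x u u, huu1, mul_one]
      _ = x * y * u := by rw [mul_assoc]
  have hane : a ≠ u := by
    intro h
    have hcc := hou2
    rw [← h, hoa4] at hcc
    norm_num at hcc
  have ha2u : a ^ 2 = u := horder2 a ha1 hane
  have hainv : a⁻¹ = a * u := hinvu a ha2u
  have humem : u ∈ zpowers a := ha2u ▸ npow_mem_zpowers a 2
  have hcard8 : Fintype.card G ≤ 8 := by
    by_contra hbig
    push_neg at hbig
    have hT1card : ({1, u, a, a * u} : Finset G).card ≤ 4 := by
      have c1 := Finset.card_insert_le (1:G) ({u, a, a*u} : Finset G)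
      have c2 := Finset.card_insert_le u ({a, a*u} : Finset G)
      have c3 := Finset.card_insert_le a ({a*u} : Finset G)
      have c4 : ({a*u} : Finset G).card = 1 := Finset.card_singleton _
      omega
    obtain ⟨y, hy⟩ := exists_not_mem_of_card_lt ({1, u, a, a * u} : Finset G) (by omega)
    simp only [Finset.mem_insert, Finset.mem_singleton, not_or] at hy
    obtain ⟨hy1, hyu, hya, hyau⟩ := hy
    have hy2 : y ^ 2 = u := horder2 y hy1 hyu
    have hyinv : y⁻¹ = y * u := hinvu y hy2
    have hay1 : a * y ≠ 1 := by
      intro h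
      apply hyau
      have hcc := eq_inv_of_mul_eq_one_right h
      rw [hainv] at hcc
      exact hcc
    have hayu : a * y ≠ u := by
      intro h
      apply hya
      have hcc : y = a⁻¹ * u := by rw [← h, ← mul_assoc, inv_mul_cancel, one_mul]
      rw [hainv, mul_assoc, huu1, mul_one] at hcc
      exact hcc
    have r1 : y * a = a * y * u := hrule a y ha2u hy2 hay1 hayu
    have hT2card : ({1, u, a, a*u, y, y*u, a*y, a*y*u} : Finset G).card ≤ 8 := by
      have c1 := Finset.card_insert_le (1:G) ({u, a, a*u, y, y*u, a*y, a*y*u} : Finset G)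
      have c2 := Finset.card_insert_le u ({a, a*u, y, y*u, a*y, a*y*u} : Finset G)
      have c3 := Finset.card_insert_le a ({a*u, y, y*u, a*y, a*y*u} : Finset G)
      have c4 := Finset.card_insert_le (a*u) ({y, y*u, a*y, a*y*u} : Finset G)
      have c5 := Finset.card_insert_le y ({y*u, a*y, a*y*u} : Finset G)
      have c6 := Finset.card_insert_le (y*u) ({a*y, a*y*u} : Finset G)
      have c7 := Finset.card_insert_le (a*y) ({a*y*u} : Finset G)
      have c8 : ({a*y*u} : Finset G).card = 1 := Finset.card_singleton _
      omega
    obtain ⟨w, hw⟩ := exists_not_mem_of_card_lt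
      ({1, u, a, a*u, y, y*u, a*y, a*y*u} : Finset G) (by omega)
    simp only [Finset.mem_insert, Finset.mem_singleton, not_or] at hw
    obtain ⟨hw1, hwu, hwa, hwau, hwy, hwyu, hway, hwayu⟩ := hw
    have hw2 : w ^ 2 = u := horder2 w hw1 hwu
    have haw1 : a * w ≠ 1 := by
      intro h
      apply hwau
      have hcc := eq_inv_of_mul_eq_one_right h
      rw [hainv] at hcc
      exact hcc
    have hawu : a * w ≠ u := by
      intro h
      apply hwa
      have hcc : w = a⁻¹ * u := by rw [← h, ← mul_assoc, inv_mul_cancel, one_mul]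
      rw [hainv, mul_assoc, huu1, mul_one] at hcc
      exact hcc
    have r2 : w * a = a * w * u := hrule a w ha2u hw2 haw1 hawu
    have hyw1 : y * w ≠ 1 := by
      intro h
      apply hwyu
      have hcc := eq_inv_of_mul_eq_one_right h
      rw [hyinv] at hcc
      exact hcc
    have hywu : y * w ≠ u := by
      intro h
      apply hwy
      have hcc : w = y⁻¹ * u := by rw [← h, ← mul_assoc, inv_mul_cancel, one_mul]
      rw [hyinv, mul_assoc, huu1, mul_one] at hcc
      exact hcc
    have r3 : w * y = y * w * u := hrule y w hy2 hw2 hyw1 hywu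
    have hay2 : (a * y) ^ 2 = u := horder2 _ hay1 hayu
    have hayinv : (a * y)⁻¹ = a * y * u := hinvu _ hay2
    have hayw1 : (a * y) * w ≠ 1 := by
      intro h
      apply hwayu
      have hcc := eq_inv_of_mul_eq_one_right h
      rw [hayinv] at hcc
      exact hcc
    have haywu : (a * y) * w ≠ u := by
      intro h
      apply hway
      have hcc : w = (a * y)⁻¹ * u := by rw [← h, ← mul_assoc, inv_mul_cancel, one_mul]
      rw [hayinv, mul_assoc, huu1, mul_one] at hcc
      exact hcc
    have r4 : w * (a * y) = (a * y) * w * u := hrule (a * y) w hay2 hw2 hayw1 haywu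
    have hch : w * (a * y) = a * y * w := by
      calc w * (a * y) = (w * a) * y := (mul_assoc w a y).symm
        _ = (a * w * u) * y := by rw [r2]
        _ = (a * w) * (u * y) := by rw [mul_assoc (a*w) u y]
        _ = (a * w) * (y * u) := by rw [hcent y]
        _ = a * ((w * y) * u) := by rw [mul_assoc a w (y*u), ← mul_assoc w y u]
        _ = a * ((y * w * u) * u) := by rw [r3]
        _ = a * (y * w) := by rw [mul_assoc (y*w) u u, huu1, mul_one]
        _ = a * y * w := by rw [← mul_assoc]
    have hfin : (a * y) * w * u = (a * y) * w * 1 := by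
      rw [mul_one, ← r4, hch]
    exact hu1 (mul_left_cancel hfin)
  have hdvdcard : 4 ∣ Fintype.card G := by rw [← hoa4]; exact orderOf_dvd_card
  have hpos : 0 < Fintype.card G := Fintype.card_pos
  have hcase : Fintype.card G = 4 ∨ Fintype.card G = 8 := by omega
  rcases hcase with hc | hc
  · exact Or.inl (cyclic_equiv hc hoa4)
  · have hex : ∃ j : G, j ∉ zpowers a := by
      by_contra hcj
      push_neg at hcj
      have htop : zpowers a = ⊤ := by rw [Subgroup.eq_top_iff']; exact hcj
      have hcc : orderOf a = Fintype.card G := by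
        rw [← Nat.card_zpowers, htop, Subgroup.card_top, Nat.card_eq_fintype_card]
      rw [hoa4, hc] at hcc
      norm_num at hcc
    obtain ⟨j, hj⟩ := hex
    have hj1 : j ≠ 1 := fun h => hj (h ▸ one_mem _)
    have hju' : j ≠ u := fun h => hj (h ▸ humem)
    have hj2 : j ^ 2 = u := horder2 j hj1 hju'
    have haj1 : a * j ≠ 1 := by
      intro h
      exact hj ((eq_inv_of_mul_eq_one_right h) ▸ inv_mem (mem_zpowers a))
    have haju : a * j ≠ u := by
      intro h
      apply hj
      have hcc : j = a⁻¹ * u := by rw [← h, ← mul_assoc, inv_mul_cancel, one_mul]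
      rw [hcc]
      exact mul_mem (inv_mem (mem_zpowers a)) humem
    have hrel0 : j * a = a * j * u := hrule a j ha2u hj2 haj1 haju
    have hrel : a * j = j * a⁻¹ := by
      rw [hainv]
      have hcc : j * a * u = a * j := by rw [hrel0, mul_assoc, huu1, mul_one]
      rw [← hcc, mul_assoc]
    exact Or.inr (quat_equiv hc hoa4 ha2u hj2 hj hrel)

end Classify

end SdimAux
/-- Corollary 5.7: for a finite group `G` of order `n ≥ 3`, the following are
equivalent: (a) `sdim(𝒫_R(G)) = n - 2`; (b) `ℛ_{𝒫_R(G)}` is a star;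
(c) `G ≅ ℤ_4`, `G ≅ Q_8`, or `G` is a `𝒫`-group. -/
theorem sdim_reducedPowerGraph_eq_card_sub_two (G : Type*) [Group G] [Fintype G]
    (h3 : 3 ≤ Fintype.card G) :
    (sdim (reducedPowerGraph G) = Fintype.card G - 2 ↔
      IsStar (reducedGraph (reducedPowerGraph G))) ∧
    (IsStar (reducedGraph (reducedPowerGraph G)) ↔
      (Nonempty (G ≃* Multiplicative (ZMod 4)) ∨
       Nonempty (G ≃* QuaternionGroup 2) ∨
       ∀ g : G, g ≠ 1 → (orderOf g).Prime)) := by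
  classical
  have hiff2 : SdimAux.NoTri G ↔
      (Nonempty (G ≃* Multiplicative (ZMod 4)) ∨
       Nonempty (G ≃* QuaternionGroup 2) ∨
       ∀ g : G, g ≠ 1 → (orderOf g).Prime) := by
    constructor
    · intro hnt
      by_cases hp : ∀ g : G, g ≠ 1 → (orderOf g).Prime
      · exact Or.inr (Or.inr hp)
      · push_neg at hp
        obtain ⟨a, ha1, hap⟩ := hp
        rcases SdimAux.classify hnt ha1 hap with h | h
        · exact Or.inl h
        · exact Or.inr (Or.inl h)
    · rintro (he | he | hp)
      · obtain ⟨e⟩ := he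
        exact SdimAux.noTri_of_Q (SdimAux.Q_of_equiv e SdimAux.zmod4_exp SdimAux.zmod4_uniq)
      · obtain ⟨e⟩ := he
        exact SdimAux.noTri_of_Q (SdimAux.Q_of_equiv e SdimAux.quat_exp SdimAux.quat_uniq)
      · exact SdimAux.noTri_of_Q (SdimAux.Q_of_P hp)
  exact ⟨(SdimAux.sdim_eq_iff h3).trans (SdimAux.isStar_iff).symm,
    (SdimAux.isStar_iff).trans hiff2⟩
end
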